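/- arXiv:1506.07935 — 5 statements merged into one kernel-verified Lean document; each statement's English description precedes it below -/
import Mathlib

section
/- Let p be a prime, let 𝒪 be the ring of integers of a finite extension F of ℚ_p, let n be a non-negative integer, and let ζ ∈ 𝒪 be a root of unity satisfying ζ^{p^n} = 1. Then 𝔮 := (T − (ζ − 1)) is a prime ideal of the power series ring 𝒪[[T]], the localization 𝒪[[T]]_𝔮 is a discrete valuation ring, and its maximal ideal is generated by the image of the element (1 + T)^{p^n} − 1. -/
open PowerSeries

namespace Stmt3Aux



variable {R : Type*} [CommRing R]

/-- Partial evaluation of a power series at `c`: evaluate the truncation. -/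
noncomputable def P (c : R) (N : ℕ) (f : PowerSeries R) : R :=
  (PowerSeries.trunc N f).eval c

lemma eval_mem_span {c : R} {q : Polynomial R} {m : ℕ} (h : Polynomial.X ^ m ∣ q) :
    q.eval c ∈ Ideal.span {c ^ m} := by
  obtain ⟨r, rfl⟩ := h
  rw [Ideal.mem_span_singleton, Polynomial.eval_mul, Polynomial.eval_pow, Polynomial.eval_X]
  exact Dvd.intro _ rfl

lemma P_mono (c : R) {m n : ℕ} (h : m ≤ n) (f : PowerSeries R) :
    P c n f - P c m f ∈ Ideal.span {c ^ m} := by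
  rw [P, P, ← Polynomial.eval_sub]
  refine eval_mem_span (Polynomial.X_pow_dvd_iff.2 fun d hd => ?_)
  simp only [Polynomial.coeff_sub, PowerSeries.coeff_trunc]
  rw [if_pos hd, if_pos (lt_of_lt_of_le hd h), sub_self]

lemma P_sub (c : R) (N : ℕ) (f g : PowerSeries R) :
    P c N (f - g) = P c N f - P c N g := by
  rw [P, P, P, ← Polynomial.eval_sub]
  congr 1
  ext d
  simp only [Polynomial.coeff_sub, PowerSeries.coeff_trunc, map_sub]

lemma P_mul (c : R) (N : ℕ) (f g : PowerSeries R) :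
    P c N (f * g) - P c N f * P c N g ∈ Ideal.span {c ^ N} := by
  have : P c N (f * g) - P c N f * P c N g =
      - ((trunc N f * trunc N g - trunc N (f * g)).eval c) := by
    simp only [P, Polynomial.eval_sub, Polynomial.eval_mul]; ring
  rw [this]
  refine neg_mem (eval_mem_span (Polynomial.X_pow_dvd_iff.2 fun d hd => ?_))
  rw [Polynomial.coeff_sub, Polynomial.coeff_mul, PowerSeries.coeff_trunc, if_pos hd,
    PowerSeries.coeff_mul, sub_eq_zero]
  refine Finset.sum_congr rfl fun x hx => ?_
  rw [Finset.HasAntidiagonal.mem_antidiagonal] at hx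
  rw [PowerSeries.coeff_trunc, PowerSeries.coeff_trunc,
    if_pos (lt_of_le_of_lt (hx ▸ Nat.le_add_right _ _) hd),
    if_pos (lt_of_le_of_lt (hx ▸ Nat.le_add_left _ _) hd)]

lemma P_C (c : R) (N : ℕ) (hN : 1 ≤ N) (a : R) : P c N (PowerSeries.C a) = a := by
  obtain ⟨N, rfl⟩ := Nat.exists_eq_add_of_le hN
  rw [P, add_comm, PowerSeries.trunc_C, Polynomial.eval_C]

lemma P_X (c : R) (N : ℕ) (hN : 2 ≤ N) : P c N (PowerSeries.X : PowerSeries R) = c := by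
  obtain ⟨N, rfl⟩ := Nat.exists_eq_add_of_le hN
  rw [P, add_comm, PowerSeries.trunc_X, Polynomial.eval_X]

lemma P_one (c : R) (N : ℕ) (hN : 1 ≤ N) : P c N (1 : PowerSeries R) = 1 := by
  obtain ⟨N, rfl⟩ := Nat.exists_eq_add_of_le hN
  rw [P, add_comm, PowerSeries.trunc_one, Polynomial.eval_one]

lemma P_zero (c : R) (N : ℕ) : P c N (0 : PowerSeries R) = 0 := by
  have : trunc N (0 : PowerSeries R) = 0 := by
    ext d; simp [PowerSeries.coeff_trunc]
  rw [P, this, Polynomial.eval_zero]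

/-- shift: drop the constant coefficient. -/
noncomputable def sh (f : PowerSeries R) : PowerSeries R :=
  PowerSeries.mk fun k => PowerSeries.coeff (k + 1) f

lemma coeff_sh (f : PowerSeries R) (k : ℕ) :
    PowerSeries.coeff k (sh f) = PowerSeries.coeff (k + 1) f := by
  simp [sh]

lemma coeff_sh_iter (f : PowerSeries R) (i k : ℕ) :
    PowerSeries.coeff k (sh^[i] f) = PowerSeries.coeff (k + i) f := by
  induction i generalizing f with
  | zero => simp
  | succ i ih =>
    rw [Function.iterate_succ_apply, ih, coeff_sh]
    ring_nf

lemma trunc_eq_C_add (c : R) (N : ℕ) (f : PowerSeries R) :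
    trunc (N + 1) f = Polynomial.C (PowerSeries.coeff 0 f) + Polynomial.X * trunc N (sh f) := by
  ext d
  simp only [PowerSeries.coeff_trunc, Polynomial.coeff_add, Polynomial.coeff_C]
  cases d with
  | zero => simp
  | succ d =>
    simp only [Nat.succ_ne_zero, if_false, Polynomial.coeff_X_mul, PowerSeries.coeff_trunc,
      coeff_sh, zero_add, Nat.succ_lt_succ_iff]

lemma P_succ (c : R) (N : ℕ) (f : PowerSeries R) :
    P c (N + 1) f = PowerSeries.coeff 0 f + c * P c N (sh f) := by
  rw [P, trunc_eq_C_add c N f]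
  simp [P]

variable {R : Type*} [CommRing R]

lemma coeff_X_sub_C_pow (c : R) (m i : ℕ) (hi : i ≤ m) :
    PowerSeries.coeff i ((PowerSeries.X - PowerSeries.C c) ^ m) =
      (-c) ^ (m - i) * (m.choose i : R) := by
  have : (PowerSeries.X - PowerSeries.C c) = (PowerSeries.X + PowerSeries.C (-c)) := by
    rw [map_neg]; ring
  rw [this, add_pow, map_sum]
  rw [Finset.sum_eq_single i]
  · rw [show (PowerSeries.X : PowerSeries R) ^ i * PowerSeries.C (-c) ^ (m - i)
        * (m.choose i : PowerSeries R)
      = PowerSeries.C ((-c) ^ (m - i) * (m.choose i : R)) * PowerSeries.X ^ i by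
        rw [← map_natCast (PowerSeries.C (R := R)) (m.choose i), ← map_pow, map_mul]; ring]
    rw [PowerSeries.coeff_C_mul, PowerSeries.coeff_X_pow, if_pos rfl, mul_one]
  · intro j hj hji
    rw [show (PowerSeries.X : PowerSeries R) ^ j * PowerSeries.C (-c) ^ (m - j)
        * (m.choose j : PowerSeries R)
      = PowerSeries.C ((-c) ^ (m - j) * (m.choose j : R)) * PowerSeries.X ^ j by
        rw [← map_natCast (PowerSeries.C (R := R)) (m.choose j), ← map_pow, map_mul]; ring]
    rw [PowerSeries.coeff_C_mul, PowerSeries.coeff_X_pow, if_neg (fun h => hji h.symm), mul_zero]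
  · intro h
    exact absurd (Finset.mem_range.2 (Nat.lt_succ_of_le hi)) h

/-- If `c^e ∈ I` then any `f` divisible by all powers of `X - C c` is zero. -/
lemma eq_zero_of_forall_pow_dvd {c : R} {I : Ideal R} {e : ℕ} (he : 1 ≤ e)
    (hce : c ^ e ∈ I)
    (haus : ∀ x : R, (∀ k : ℕ, x ∈ I ^ k) → x = 0)
    (f : PowerSeries R)
    (hf : ∀ m : ℕ, (PowerSeries.X - PowerSeries.C c) ^ m ∣ f) : f = 0 := by
  ext j
  rw [map_zero]
  refine haus _ fun k => ?_
  obtain ⟨g, hg⟩ := hf (e * k + j)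
  rw [hg, PowerSeries.coeff_mul]
  refine Ideal.sum_mem _ fun x hx => ?_
  rw [Finset.HasAntidiagonal.mem_antidiagonal] at hx
  have hx1 : x.1 ≤ j := hx ▸ Nat.le_add_right _ _
  refine Ideal.mul_mem_right _ _ ?_
  rw [coeff_X_sub_C_pow c _ _ (le_trans hx1 (Nat.le_add_left _ _))]
  refine Ideal.mul_mem_right _ _ ?_
  rw [neg_pow]
  refine Ideal.mul_mem_left _ _ ?_
  rw [show e * k + j - x.1 = e * k + (j - x.1) by omega, pow_add, pow_mul]
  exact Ideal.mul_mem_right _ _ (Ideal.pow_mem_pow hce k)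


variable {p : ℕ} [Fact p.Prime]

lemma zp_smul_top (J : Ideal ℤ_[p]) : (J • ⊤ : Submodule ℤ_[p] ℤ_[p]) = J := by
  rw [smul_eq_mul, Ideal.mul_top]

lemma zp_haus (x : ℤ_[p]) (h : ∀ k : ℕ, x ∈ Ideal.span {(p : ℤ_[p])} ^ k) : x = 0 := by
  refine IsHausdorff.haus (inferInstance : IsHausdorff (IsLocalRing.maximalIdeal ℤ_[p]) ℤ_[p])
    x fun k => ?_
  rw [SModEq.zero, zp_smul_top, PadicInt.maximalIdeal_eq_span_p]
  exact h k

lemma zp_prec (s : ℕ → ℤ_[p])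
    (h : ∀ m n : ℕ, m ≤ n → s n - s m ∈ Ideal.span {(p : ℤ_[p])} ^ m) :
    ∃ L : ℤ_[p], ∀ m : ℕ, L - s m ∈ Ideal.span {(p : ℤ_[p])} ^ m := by
  have hcoh : ∀ {m n : ℕ}, m ≤ n →
      s m ≡ s n [SMOD (IsLocalRing.maximalIdeal ℤ_[p] ^ m • ⊤ : Submodule ℤ_[p] ℤ_[p])] := by
    intro m n hmn
    rw [SModEq.sub_mem, zp_smul_top, PadicInt.maximalIdeal_eq_span_p]
    simpa using neg_mem (h m n hmn)
  obtain ⟨L, hL⟩ := IsPrecomplete.prec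
    (inferInstance : IsPrecomplete (IsLocalRing.maximalIdeal ℤ_[p]) ℤ_[p]) (f := s) hcoh
  refine ⟨L, fun m => ?_⟩
  have := hL m
  rw [SModEq.sub_mem, zp_smul_top, PadicInt.maximalIdeal_eq_span_p] at this
  simpa using neg_mem this

variable {O : Type*} [CommRing O] [Algebra ℤ_[p] O] [Module.Finite ℤ_[p] O]
  [Module.IsTorsionFree ℤ_[p] O]

attribute [local instance] Module.free_of_finite_type_torsion_free'

lemma mem_span_p_pow_iff (b : Module.Basis (Module.Free.ChooseBasisIndex ℤ_[p] O) ℤ_[p] O)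
    (x : O) (k : ℕ) :
    x ∈ Ideal.span {(p : O)} ^ k ↔
      ∀ i, b.repr x i ∈ Ideal.span {(p : ℤ_[p])} ^ k := by
  constructor
  · intro hx i
    rw [Ideal.span_singleton_pow, Ideal.mem_span_singleton'] at hx
    obtain ⟨y, hy⟩ := hx
    have : x = ((p : ℤ_[p]) ^ k) • y := by
      rw [Algebra.smul_def, map_pow, map_natCast, ← hy, mul_comm]
    rw [this, map_smul, Ideal.span_singleton_pow, Ideal.mem_span_singleton']
    exact ⟨b.repr y i, by simp [mul_comm]⟩
  · intro hx
    have : ∀ i, ∃ z : ℤ_[p], b.repr x i = (p : ℤ_[p]) ^ k * z := by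
      intro i
      have := hx i
      rw [Ideal.span_singleton_pow, Ideal.mem_span_singleton'] at this
      obtain ⟨z, hz⟩ := this
      exact ⟨z, by rw [← hz, mul_comm]⟩
    choose z hz using this
    have hx2 : x = ((p : ℤ_[p]) ^ k) • (∑ i, z i • b i) := by
      conv_lhs => rw [← b.sum_repr x]
      rw [Finset.smul_sum]
      refine Finset.sum_congr rfl fun i _ => ?_
      rw [hz i, mul_smul]
    rw [Ideal.span_singleton_pow, Ideal.mem_span_singleton']
    exact ⟨∑ i, z i • b i, by rw [hx2, Algebra.smul_def, map_pow, map_natCast, mul_comm]⟩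

lemma padic_haus (x : O) (h : ∀ k : ℕ, x ∈ Ideal.span {(p : O)} ^ k) : x = 0 := by
  let b := Module.Free.chooseBasis ℤ_[p] O
  have : ∀ i, b.repr x i = 0 := fun i =>
    zp_haus _ fun k => (mem_span_p_pow_iff b x k).1 (h k) i
  have : b.repr x = 0 := Finsupp.ext this
  simpa using congrArg b.repr.symm this

lemma padic_prec (s : ℕ → O)
    (h : ∀ m n : ℕ, m ≤ n → s n - s m ∈ Ideal.span {(p : O)} ^ m) :
    ∃ L : O, ∀ m : ℕ, L - s m ∈ Ideal.span {(p : O)} ^ m := by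
  let b := Module.Free.chooseBasis ℤ_[p] O
  have : ∀ i, ∃ Li : ℤ_[p], ∀ m : ℕ,
      Li - b.repr (s m) i ∈ Ideal.span {(p : ℤ_[p])} ^ m := by
    intro i
    refine zp_prec (fun m => b.repr (s m) i) fun m n hmn => ?_
    have := (mem_span_p_pow_iff b _ m).1 (h m n hmn) i
    simpa [map_sub] using this
  choose Lf hLf using this
  refine ⟨∑ i, Lf i • b i, fun m => ?_⟩
  rw [mem_span_p_pow_iff b]
  intro i
  have hrepr : b.repr (∑ j, Lf j • b j) i = Lf i := by
    simp [Finsupp.single_apply, Finset.sum_apply']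
  rw [map_sub, Finsupp.sub_apply, hrepr]
  exact hLf i m

variable {p : ℕ} [Fact p.Prime]
variable {O : Type*} [CommRing O] [IsDomain O] [CharZero O] [Algebra ℤ_[p] O]

lemma algebraMap_injective : Function.Injective (algebraMap ℤ_[p] O) := by
  rw [injective_iff_map_eq_zero]
  intro x hx
  by_contra hx0
  obtain ⟨n, u, hu⟩ := IsDiscreteValuationRing.eq_unit_mul_pow_irreducible hx0
    PadicInt.irreducible_p
  rw [hu, map_mul, map_pow, map_natCast] at hx
  have hpu : IsUnit (algebraMap ℤ_[p] O u) := (Units.isUnit u).map _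
  have hp0 : ((p : O) ^ n) ≠ 0 :=
    pow_ne_zero _ (Nat.cast_ne_zero.2 (Fact.out : p.Prime).ne_zero)
  exact (mul_ne_zero hpu.ne_zero hp0) hx

lemma noZeroSMulDivisors : Module.IsTorsionFree ℤ_[p] O :=
  Module.isTorsionFree_iff_algebraMap_injective.2 algebraMap_injective

lemma exists_eval (c : R) (I : Ideal R) (e : ℕ) (he : 2 ≤ e) (hce : c ^ e ∈ I)
    (haus : ∀ x : R, (∀ k : ℕ, x ∈ I ^ k) → x = 0)
    (prec : ∀ s : ℕ → R, (∀ m n : ℕ, m ≤ n → s n - s m ∈ I ^ m) →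
      ∃ L : R, ∀ m : ℕ, L - s m ∈ I ^ m) :
    ∃ E : PowerSeries R → R,
      (∀ a : R, E (PowerSeries.C a) = a) ∧
      E PowerSeries.X = c ∧
      (∀ f g, E (f * g) = E f * E g) ∧
      (∀ f g, E (f + g) = E f + E g) ∧
      (∀ f g, E (f - g) = E f - E g) ∧
      E 1 = 1 ∧
      (∀ f, E f = 0 ↔ (PowerSeries.X - PowerSeries.C c) ∣ f) ∧
      (∀ q : Polynomial R, E (q : PowerSeries R) = q.eval c) := by
  have hspan : ∀ m : ℕ, Ideal.span {c ^ (e * m)} ≤ I ^ m := by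
    intro m
    rw [Ideal.span_le, Set.singleton_subset_iff, SetLike.mem_coe, pow_mul]
    exact Ideal.pow_mem_pow hce m
  -- existence of the limit
  have hEx : ∀ f : PowerSeries R, ∃ L : R, ∀ m : ℕ, L - P c (e * m) f ∈ I ^ m := by
    intro f
    refine prec (fun m => P c (e * m) f) fun m n hmn => ?_
    exact hspan m (P_mono c (Nat.mul_le_mul_left e hmn) f)
  choose E hE using hEx
  have huniq : ∀ (f : PowerSeries R) (y : R),
      (∀ m : ℕ, y - P c (e * m) f ∈ I ^ m) → E f = y := by
    intro f y hy
    refine sub_eq_zero.1 (haus _ fun k => ?_)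
    have := sub_mem (hE f k) (hy k)
    simpa using this
  have hE_C : ∀ a : R, E (PowerSeries.C a) = a := by
    intro a
    refine huniq _ _ fun m => ?_
    rcases Nat.eq_zero_or_pos m with rfl | hm
    · simpa using Submodule.mem_top
    · rw [P_C c _ (le_trans hm (Nat.le_mul_of_pos_left m (by omega))), sub_self]
      exact Ideal.zero_mem _
  have hE_X : E PowerSeries.X = c := by
    refine huniq _ _ fun m => ?_
    rcases Nat.eq_zero_or_pos m with rfl | hm
    · simpa using Submodule.mem_top
    · rw [P_X c _ (le_trans he (Nat.le_mul_of_pos_right e hm)), sub_self]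
      exact Ideal.zero_mem _
  have hE_one : E (1 : PowerSeries R) = 1 := by
    refine huniq _ _ fun m => ?_
    rcases Nat.eq_zero_or_pos m with rfl | hm
    · simpa using Submodule.mem_top
    · rw [P_one c _ (le_trans hm (Nat.le_mul_of_pos_left m (by omega))), sub_self]
      exact Ideal.zero_mem _
  have hE_zero : E (0 : PowerSeries R) = 0 := by
    refine huniq _ _ fun m => ?_
    rw [P_zero, sub_self]
    exact Ideal.zero_mem _
  have hE_sub : ∀ f g, E (f - g) = E f - E g := by
    intro f g
    refine huniq _ _ fun m => ?_
    rw [P_sub]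
    have := sub_mem (hE f m) (hE g m)
    convert this using 1
    ring
  have hE_add : ∀ f g, E (f + g) = E f + E g := by
    intro f g
    have h1 : f + g = f - (0 - g) := by ring
    rw [h1, hE_sub, hE_sub, hE_zero]
    ring
  have hE_mul : ∀ f g, E (f * g) = E f * E g := by
    intro f g
    refine huniq _ _ fun m => ?_
    have h1 : E f * E g - P c (e * m) (f * g) =
        (E f - P c (e * m) f) * E g + P c (e * m) f * (E g - P c (e * m) g)
          - (P c (e * m) (f * g) - P c (e * m) f * P c (e * m) g) := by ring
    rw [h1]
    exact sub_mem (add_mem (Ideal.mul_mem_right _ _ (hE f m))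
      (Ideal.mul_mem_left _ _ (hE g m))) (hspan m (P_mul c (e * m) f g))
  -- the shift property
  have hE_shift : ∀ f : PowerSeries R, E f = PowerSeries.coeff 0 f + c * E (sh f) := by
    intro f
    refine huniq _ _ fun m => ?_
    rcases Nat.eq_zero_or_pos m with rfl | hm
    · simpa using Submodule.mem_top
    · have hem : 1 ≤ e * m := le_trans hm (Nat.le_mul_of_pos_left m (by omega))
      obtain ⟨N, hN⟩ : ∃ N, e * m = N + 1 := ⟨e * m - 1, by omega⟩
      rw [hN, P_succ]
      have h1 : PowerSeries.coeff 0 f + c * E (sh f)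
          - (PowerSeries.coeff 0 f + c * P c N (sh f))
          = c * (E (sh f) - P c (e * m) (sh f)) + c * (P c (e * m) (sh f) - P c N (sh f)) := by
        ring
      rw [h1]
      refine add_mem (Ideal.mul_mem_left _ _ (hE (sh f) m)) ?_
      have h2 : P c (e * m) (sh f) - P c N (sh f) ∈ Ideal.span {c ^ N} :=
        P_mono c (by omega) (sh f)
      rw [Ideal.mem_span_singleton] at h2
      obtain ⟨r, hr⟩ := h2
      rw [hr]
      refine hspan m ?_
      rw [Ideal.mem_span_singleton, hN, pow_succ]
      exact ⟨r, by ring⟩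
  -- kernel characterization
  have hker : ∀ f : PowerSeries R, E f = 0 ↔ (PowerSeries.X - PowerSeries.C c) ∣ f := by
    intro f
    constructor
    · intro hf
      refine ⟨PowerSeries.mk fun k => E (sh^[k + 1] f), ?_⟩
      ext k
      rw [sub_mul, map_sub, PowerSeries.coeff_C_mul]
      cases k with
      | zero =>
        have h0 := hE_shift f
        rw [hf] at h0
        simp only [PowerSeries.coeff_mk, PowerSeries.coeff_zero_eq_constantCoeff,
          map_mul, constantCoeff_X, zero_mul, zero_sub]
        rw [Function.iterate_one]
        have : PowerSeries.coeff 0 f = - (c * E (sh f)) := by linear_combination -h0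
        simpa [PowerSeries.coeff_zero_eq_constantCoeff] using this
      | succ k =>
        rw [PowerSeries.coeff_succ_X_mul, PowerSeries.coeff_mk, PowerSeries.coeff_mk]
        have h1 := hE_shift (sh^[k + 1] f)
        rw [← Function.iterate_succ_apply' sh (k + 1) f] at h1
        rw [coeff_sh_iter] at h1
        rw [zero_add] at h1
        rw [h1]
        ring
    · rintro ⟨g, rfl⟩
      rw [hE_mul, hE_sub, hE_X, hE_C, sub_self, zero_mul]
  -- polynomial evaluation
  have hE_pow : ∀ k : ℕ, E ((PowerSeries.X : PowerSeries R) ^ k) = c ^ k := by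
    intro k
    induction k with
    | zero => simpa using hE_one
    | succ k ih => rw [pow_succ, hE_mul, ih, hE_X, pow_succ]
  have hE_poly : ∀ q : Polynomial R, E (q : PowerSeries R) = q.eval c := by
    intro q
    induction q using Polynomial.induction_on with
    | C a => rw [Polynomial.coe_C, hE_C, Polynomial.eval_C]
    | add q r hq hr => rw [Polynomial.coe_add, hE_add, hq, hr, Polynomial.eval_add]
    | monomial k a _ =>
      rw [Polynomial.coe_mul, Polynomial.coe_pow, Polynomial.coe_C, Polynomial.coe_X,
        hE_mul, hE_C, hE_pow, Polynomial.eval_mul, Polynomial.eval_C, Polynomial.eval_pow,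
        Polynomial.eval_X]
  exact ⟨E, hE_C, hE_X, hE_mul, hE_add, hE_sub, hE_one, hker, hE_poly⟩


lemma exists_e {O : Type*} [CommRing O] [IsDomain O] (p n : ℕ) (hp : p.Prime)
    (ζ : O) (hζ : ζ ^ p ^ n = 1) :
    ∃ e : ℕ, 2 ≤ e ∧ (ζ - 1) ^ e ∈ Ideal.span {(p : O)} := by
  set c : O := ζ - 1 with hc
  -- first find e₀ ≥ 1 with c ^ e₀ ∈ (p)
  have h0 : ∃ e₀ : ℕ, 1 ≤ e₀ ∧ c ^ e₀ ∈ Ideal.span {(p : O)} := by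
    rcases Nat.eq_zero_or_pos n with rfl | hn
    · refine ⟨1, le_refl _, ?_⟩
      have : ζ = 1 := by simpa using hζ
      rw [pow_one, hc, this, sub_self]
      exact Ideal.zero_mem _
    · have hpn : 2 ≤ p ^ n := by
        calc 2 ≤ p := hp.two_le
        _ ≤ p ^ n := Nat.le_self_pow (by omega) p
      have hζc : (c + 1) ^ p ^ n = 1 := by rw [hc, sub_add_cancel, hζ]
      have hbin : c ^ p ^ n ∈ Ideal.span {(p : O) * c} := by
        have hsum := add_pow c 1 (p ^ n)
        simp only [one_pow, mul_one] at hsum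
        rw [hζc] at hsum
        rw [Finset.sum_range_succ, Nat.choose_self, Nat.cast_one, mul_one] at hsum
        obtain ⟨M, hM⟩ : ∃ M, p ^ n = M + 1 := ⟨p ^ n - 1, by omega⟩
        rw [hM, Finset.sum_range_succ'] at hsum
        simp only [pow_zero, Nat.choose_zero_right, Nat.cast_one, one_mul] at hsum
        -- hsum : (∑ i in range M, c ^ (i+1) * choose (M+1) (i+1)) + 1 + c ^ (M+1) = 1
        have key : c ^ (M + 1) =
            -∑ i ∈ Finset.range M, c ^ (i + 1) * ((M + 1).choose (i + 1) : O) := by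
          linear_combination -hsum
        rw [← hM] at key
        rw [key]
        refine neg_mem (Ideal.sum_mem _ fun i hi => ?_)
        rw [Finset.mem_range] at hi
        obtain ⟨m, hm⟩ : (p : ℕ) ∣ (p ^ n).choose (i + 1) :=
          hp.dvd_choose_pow (by omega) (by rw [hM]; omega)
        rw [hM] at hm ⊢
        rw [hm, Ideal.mem_span_singleton]
        refine ⟨c ^ i * m, ?_⟩
        push_cast
        ring
      rw [Ideal.mem_span_singleton] at hbin
      obtain ⟨y, hy⟩ := hbin
      have hfact : c * (c ^ (p ^ n - 1) - (p : O) * y) = 0 := by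
        have : c ^ p ^ n = c * c ^ (p ^ n - 1) := by
          rw [← pow_succ']
          congr 1
          omega
        rw [mul_sub, ← this, hy]
        ring
      rcases mul_eq_zero.1 hfact with hc0 | hrest
      · exact ⟨p ^ n - 1, by omega, by rw [hc0, zero_pow (by omega)]; exact Ideal.zero_mem _⟩
      · refine ⟨p ^ n - 1, by omega, ?_⟩
        rw [sub_eq_zero] at hrest
        rw [hrest, Ideal.mem_span_singleton]
        exact ⟨y, rfl⟩
  obtain ⟨e₀, he₀, hce₀⟩ := h0
  refine ⟨2 * e₀, by omega, ?_⟩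
  rw [two_mul, pow_add]
  exact Ideal.mul_mem_right _ _ hce₀


end Stmt3Aux

/-- Let `p` be a prime, `𝒪` the ring of integers of a finite extension `F` of `ℚ_p`
(encoded abstractly: an integrally closed domain of characteristic zero that is finite as an
`ℤ_p`-module), `n ≥ 0`, and `ζ ∈ 𝒪` a root of unity with `ζ^(p^n) = 1`.  Then
`𝔮 := (T − (ζ − 1))` is a prime ideal of `𝒪[[T]]`, the localization `𝒪[[T]]_𝔮` is a
discrete valuation ring, and its maximal ideal is generated by the image of
`(1 + T)^(p^n) − 1`. -/
theorem stmt_3 (p : ℕ) [Fact p.Prime] (n : ℕ)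
    (𝒪 : Type*) [CommRing 𝒪] [IsDomain 𝒪] [CharZero 𝒪] [IsIntegrallyClosed 𝒪]
    [Algebra ℤ_[p] 𝒪] [Module.Finite ℤ_[p] 𝒪]
    (ζ : 𝒪) (hζ : ζ ^ p ^ n = 1)
    (𝔮 : Ideal (PowerSeries 𝒪))
    (h𝔮 : 𝔮 = Ideal.span {PowerSeries.X - PowerSeries.C (ζ - 1)}) :
    ∃ _ : 𝔮.IsPrime, ∃ _ : IsDomain (Localization.AtPrime 𝔮),
      IsDiscreteValuationRing (Localization.AtPrime 𝔮) ∧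
      IsLocalRing.maximalIdeal (Localization.AtPrime 𝔮) =
        Ideal.span {algebraMap (PowerSeries 𝒪) (Localization.AtPrime 𝔮)
          ((1 + PowerSeries.X) ^ p ^ n - 1)} := by
  classical
  set c : 𝒪 := ζ - 1 with hc
  obtain ⟨e, he2, hce⟩ := Stmt3Aux.exists_e p n Fact.out ζ hζ
  rw [← hc] at hce
  haveI : Module.IsTorsionFree ℤ_[p] 𝒪 := Stmt3Aux.noZeroSMulDivisors
  have haus : ∀ x : 𝒪, (∀ k : ℕ, x ∈ Ideal.span {(p : 𝒪)} ^ k) → x = 0 :=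
    Stmt3Aux.padic_haus
  have prec := Stmt3Aux.padic_prec (p := p) (O := 𝒪)
  obtain ⟨E, hE_C, hE_X, hE_mul, hE_add, hE_sub, hE_one, hker, hE_poly⟩ :=
    Stmt3Aux.exists_eval c (Ideal.span {(p : 𝒪)}) e he2 hce haus prec
  have hmem : ∀ f : PowerSeries 𝒪, f ∈ 𝔮 ↔ E f = 0 := by
    intro f
    rw [h𝔮, Ideal.mem_span_singleton, hker]
  -- primality
  have hprime : 𝔮.IsPrime := by
    rw [Ideal.isPrime_iff]
    constructor
    · intro htop
      have h1 : (1 : PowerSeries 𝒪) ∈ 𝔮 := htop ▸ Submodule.mem_top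
      rw [hmem, hE_one] at h1
      exact one_ne_zero h1
    · intro f g hfg
      rw [hmem, hE_mul] at hfg
      rcases mul_eq_zero.1 hfg with h | h
      · exact Or.inl ((hmem f).2 h)
      · exact Or.inr ((hmem g).2 h)
  haveI := hprime
  haveI hdom : IsDomain (Localization.AtPrime 𝔮) :=
    IsLocalization.isDomain_of_local_atPrime hprime
  set L := Localization.AtPrime 𝔮
  set t : L := algebraMap (PowerSeries 𝒪) L (PowerSeries.X - PowerSeries.C c) with ht
  -- the maximal ideal
  have hmax : IsLocalRing.maximalIdeal L = Ideal.span {t} := by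
    have h1 : Ideal.map (algebraMap (PowerSeries 𝒪) L) 𝔮 = IsLocalRing.maximalIdeal L :=
      Localization.AtPrime.map_eq_maximalIdeal (I := 𝔮)
    have h2 := congrArg (Ideal.map (algebraMap (PowerSeries 𝒪) L)) h𝔮
    rw [Ideal.map_span, Set.image_singleton] at h2
    rw [← h1, h2]
  have hinj : Function.Injective (algebraMap (PowerSeries 𝒪) L) :=
    IsLocalization.injective L 𝔮.primeCompl_le_nonZeroDivisors
  have hXc_ne : (PowerSeries.X - PowerSeries.C c) ≠ 0 := by
    intro h
    have := congrArg (PowerSeries.coeff 1) h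
    simp [PowerSeries.coeff_C] at this
  have ht_ne : t ≠ 0 := fun h => hXc_ne (hinj (by rw [map_zero]; exact h))
  have hirr : Irreducible t :=
    IsDiscreteValuationRing.irreducible_of_span_eq_maximalIdeal t ht_ne hmax
  -- unit-times-power factorization
  have hfact : ∀ x : L, x ≠ 0 → ∃ m : ℕ, Associated (t ^ m) x := by
    intro x hx
    obtain ⟨⟨f, s⟩, rfl⟩ := IsLocalization.mk'_surjective (S := L) 𝔮.primeCompl x
    dsimp only at hx ⊢
    have hs : IsUnit (algebraMap (PowerSeries 𝒪) L (s : PowerSeries 𝒪)) :=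
      IsLocalization.map_units L s
    obtain ⟨u, hu⟩ := hs
    have hassoc : Associated (algebraMap (PowerSeries 𝒪) L f)
        (IsLocalization.mk' L f s) := by
      refine ⟨u⁻¹, ?_⟩
      rw [← IsLocalization.mk'_spec L f s, ← hu, mul_assoc, Units.mul_inv, mul_one]
    have hf0 : f ≠ 0 := by
      rintro rfl
      rw [IsLocalization.mk'_zero] at hx
      exact hx rfl
    have hfin : ∃ m : ℕ, ¬ (PowerSeries.X - PowerSeries.C c) ^ m ∣ f := by
      by_contra hall
      push_neg at hall
      exact hf0 (Stmt3Aux.eq_zero_of_forall_pow_dvd (by omega) hce haus f hall)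
    obtain ⟨N, hspec, hmin⟩ : ∃ N : ℕ, (¬ (PowerSeries.X - PowerSeries.C c) ^ N ∣ f) ∧
        ∀ m < N, (PowerSeries.X - PowerSeries.C c) ^ m ∣ f :=
      ⟨Nat.find hfin, Nat.find_spec hfin, fun m hm => of_not_not (Nat.find_min hfin hm)⟩
    have hN0 : N ≠ 0 := by
      intro h
      rw [h, pow_zero] at hspec
      exact hspec (one_dvd f)
    obtain ⟨g, hg⟩ := hmin (N - 1) (by omega)
    have hgnot : ¬ (PowerSeries.X - PowerSeries.C c) ∣ g := by
      rintro ⟨k, hk⟩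
      refine hspec ⟨k, ?_⟩
      rw [hg, hk]
      conv_rhs => rw [show N = (N - 1) + 1 by omega]
      ring
    have hgu : IsUnit (algebraMap (PowerSeries 𝒪) L g) :=
      (IsLocalization.AtPrime.isUnit_to_map_iff L 𝔮 g).mpr
        (fun hgm => hgnot ((hker g).1 ((hmem g).1 hgm)))
    refine ⟨N - 1, ?_⟩
    refine Associated.trans ?_ hassoc
    obtain ⟨v, hv⟩ := hgu
    refine ⟨v, ?_⟩
    rw [hv, ht, ← map_pow, ← map_mul, ← hg]
  haveI hdvr : IsDiscreteValuationRing L :=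
    IsDiscreteValuationRing.ofHasUnitMulPowIrreducibleFactorization
      ⟨t, hirr, fun {x} hx => hfact x hx⟩
  -- the distinguished generator
  have hfinal : IsLocalRing.maximalIdeal L =
      Ideal.span {algebraMap (PowerSeries 𝒪) L ((1 + PowerSeries.X) ^ p ^ n - 1)} := by
    set F : Polynomial 𝒪 := (1 + Polynomial.X) ^ p ^ n - 1 with hF
    have hroot : F.IsRoot c := by
      rw [Polynomial.IsRoot, hF]
      simp only [Polynomial.eval_sub, Polynomial.eval_pow, Polynomial.eval_add,
        Polynomial.eval_one, Polynomial.eval_X]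
      rw [hc, show (1 : 𝒪) + (ζ - 1) = ζ by ring, hζ, sub_self]
    obtain ⟨G, hG⟩ := Polynomial.dvd_iff_isRoot.2 hroot
    have hGeval : G.eval c ≠ 0 := by
      have hder := congrArg Polynomial.derivative hG
      rw [hF, Polynomial.derivative_sub, Polynomial.derivative_one, Polynomial.derivative_pow,
        Polynomial.derivative_add, Polynomial.derivative_one, Polynomial.derivative_X,
        Polynomial.derivative_mul, Polynomial.derivative_sub, Polynomial.derivative_X,
        Polynomial.derivative_C] at hder
      have heval := congrArg (Polynomial.eval c) hder
      simp only [Polynomial.eval_sub, Polynomial.eval_mul, Polynomial.eval_add,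
        Polynomial.eval_pow, Polynomial.eval_one, Polynomial.eval_X, Polynomial.eval_natCast,
        Polynomial.eval_C, sub_zero, mul_one, sub_self, zero_sub, zero_mul, one_mul,
        zero_add, add_zero, mul_zero] at heval
      rw [hc, show (1 : 𝒪) + (ζ - 1) = ζ by ring] at heval
      rw [← heval]
      refine mul_ne_zero ?_ ?_
      · exact_mod_cast pow_ne_zero n (Nat.cast_ne_zero.2 (Fact.out : p.Prime).ne_zero)
      · refine pow_ne_zero _ fun h0 => ?_
        rw [h0, zero_pow (pow_ne_zero n (Fact.out : p.Prime).ne_zero)] at hζ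
        exact zero_ne_one hζ
    have hps : ((1 + PowerSeries.X) ^ p ^ n - 1 : PowerSeries 𝒪) =
        (PowerSeries.X - PowerSeries.C c) * (G : PowerSeries 𝒪) := by
      have := congrArg (fun q : Polynomial 𝒪 => (q : PowerSeries 𝒪)) hG
      simpa only [hF, Polynomial.coe_sub, Polynomial.coe_pow, Polynomial.coe_add,
        Polynomial.coe_one, Polynomial.coe_X, Polynomial.coe_mul, Polynomial.coe_C] using this
    have hGu : IsUnit (algebraMap (PowerSeries 𝒪) L (G : PowerSeries 𝒪)) :=
      (IsLocalization.AtPrime.isUnit_to_map_iff L 𝔮 _).mpr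
        (fun hGm => hGeval (by
          have h3 := (hmem _).1 hGm
          rwa [hE_poly] at h3))
    rw [hmax, hps, map_mul, ← ht, Ideal.span_singleton_mul_right_unit hGu]
  exact ⟨hprime, hdom, hdvr, hfinal⟩
end

section
/- Let R be a discrete valuation ring with uniformizer ϖ and residue field E = R/(ϖ). Let Π be a finite free R-module, ψ: Π → Π an R-linear map, and ψ̄: Π/ϖΠ → Π/ϖΠ its reduction modulo ϖ. Then the Bockstein map β: ker ψ̄ → coker ψ̄, defined by β(x mod ϖΠ) := y mod (ψ(Π) + ϖΠ) where x ∈ Π is any lift with ψ(x) = ϖy, is well-defined (independent of the choice of lift), and if moreover the R-torsion submodule of coker ψ is annihilated by ϖ, then the natural E-linear map (ker ψ) ⊗_R E → ker ψ̄ induced by the inclusion ker ψ ⊆ Π is injective and its image is exactly ker β. -/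
open Pointwise

private lemma mem_smul_top_iff' {R : Type*} [CommRing R] {M : Type*} [AddCommGroup M]
    [Module R M] (r : R) (x : M) : x ∈ r • (⊤ : Submodule R M) ↔ ∃ m : M, r • m = x := by
  constructor
  · intro h
    obtain ⟨m, -, hm⟩ := Set.mem_smul_set.mp h
    exact ⟨m, hm⟩
  · rintro ⟨m, rfl⟩
    exact Submodule.smul_mem_pointwise_smul m r ⊤ trivial

/-- Let `R` be a discrete valuation ring with uniformizer `ϖ` and residue field `E = R/(ϖ)`.
Let `Π` (here `M`) be a finite free `R`-module, `ψ : M → M` an `R`-linear map and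
`ψbar : M/ϖM → M/ϖM` its reduction mod `ϖ`.  Then the Bockstein map
`β : ker ψbar → coker ψbar`, `β(x mod ϖM) := y mod (ψ(M) + ϖM)` where `ψ(x) = ϖ·y`,
is well-defined (first conjunct: independence of the chosen lift), and if the `R`-torsion
submodule of `coker ψ` is annihilated by `ϖ`, then the natural `E`-linear map
`(ker ψ) ⊗_R E → ker ψbar` is injective (stated elementarily: if `x ∈ ker ψ` maps to `0` in
`M/ϖM` then `x ∈ ϖ·(ker ψ)`) and its image is exactly `ker β` (the last two conjuncts). -/
theorem stmt_5 (R : Type*) [CommRing R] [IsDomain R] [IsDiscreteValuationRing R]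
    (ϖ : R) (hϖ : Irreducible ϖ)
    (M : Type*) [AddCommGroup M] [Module R M] [Module.Free R M] [Module.Finite R M]
    (ψ : M →ₗ[R] M)
    (ϖM : Submodule R M) (hϖM : ϖM = ϖ • (⊤ : Submodule R M))
    (ψbar : (M ⧸ ϖM) →ₗ[R] (M ⧸ ϖM))
    (hψbar : ∀ x : M, ψbar (Submodule.Quotient.mk x) = Submodule.Quotient.mk (ψ x)) :
    (∀ x x' y y' : M,
        (Submodule.Quotient.mk x : M ⧸ ϖM) = Submodule.Quotient.mk x' →
        ψ x = ϖ • y → ψ x' = ϖ • y' →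
        (Submodule.Quotient.mk (Submodule.Quotient.mk y : M ⧸ ϖM) :
            (M ⧸ ϖM) ⧸ LinearMap.range ψbar) =
          Submodule.Quotient.mk (Submodule.Quotient.mk y' : M ⧸ ϖM)) ∧
    ((∀ c : M ⧸ LinearMap.range ψ, (∃ r : R, r ≠ 0 ∧ r • c = 0) → ϖ • c = 0) →
      (∀ x : M, ψ x = 0 → (Submodule.Quotient.mk x : M ⧸ ϖM) = 0 →
          ∃ z : M, ψ z = 0 ∧ x = ϖ • z) ∧
      (∀ x y : M, ψ x = 0 → ψ x = ϖ • y →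
          (Submodule.Quotient.mk y : M ⧸ ϖM) ∈ LinearMap.range ψbar) ∧
      (∀ x y : M, ψ x = ϖ • y →
          (Submodule.Quotient.mk y : M ⧸ ϖM) ∈ LinearMap.range ψbar →
          ∃ u : M, ψ u = 0 ∧
            (Submodule.Quotient.mk u : M ⧸ ϖM) = Submodule.Quotient.mk x)) := by
  have hϖ0 : ϖ ≠ 0 := hϖ.ne_zero
  have hinjM : ∀ a b : M, ϖ • a = ϖ • b → a = b := fun a b h =>
    smul_right_injective M hϖ0 h
  have hmem : ∀ x : M, x ∈ ϖM ↔ ∃ m : M, ϖ • m = x := by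
    intro x; rw [hϖM]; exact mem_smul_top_iff' ϖ x
  constructor
  · -- well-definedness
    intro x x' y y' hxx' hy hy'
    rw [Submodule.Quotient.eq] at hxx' ⊢
    obtain ⟨m, hm⟩ := (hmem _).mp hxx'
    have hyy' : y - y' = ψ m := by
      apply hinjM
      rw [smul_sub, ← hy, ← hy', ← map_sub, ← hm, map_smul]
    have : (Submodule.Quotient.mk y : M ⧸ ϖM) - Submodule.Quotient.mk y'
        = ψbar (Submodule.Quotient.mk m) := by
      rw [hψbar, ← Submodule.Quotient.mk_sub, hyy']
    rw [this]
    exact LinearMap.mem_range_self _ _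
  · intro htor
    refine ⟨?_, ?_, ?_⟩
    · -- injectivity
      intro x hx hx0
      rw [Submodule.Quotient.mk_eq_zero] at hx0
      obtain ⟨z, hz⟩ := (hmem _).mp hx0
      refine ⟨z, ?_, hz.symm⟩
      apply hinjM _ 0
      rw [smul_zero, ← map_smul, hz, hx]
    · -- ker ψ ⊆ ker β
      intro x y hx hxy
      have : y = 0 := by
        apply hinjM _ 0
        rw [smul_zero, ← hxy, hx]
      rw [this]
      exact ⟨0, by simp⟩
    · -- ker β ⊆ image of ker ψ
      intro x y hxy hran
      obtain ⟨q, hq⟩ := hran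
      obtain ⟨w, rfl⟩ := Submodule.Quotient.mk_surjective _ q
      rw [hψbar] at hq
      rw [Submodule.Quotient.eq] at hq
      obtain ⟨m, hm⟩ := (hmem _).mp hq
      have hv : ψ (x - ϖ • w) = (ϖ * ϖ) • (-m) := by
        rw [map_sub, map_smul, hxy, ← smul_sub, mul_smul, smul_neg, hm, neg_sub]
      set c : M ⧸ LinearMap.range ψ := Submodule.Quotient.mk (-m) with hc
      have hc0 : (ϖ * ϖ) • c = 0 := by
        rw [hc, ← Submodule.Quotient.mk_smul, Submodule.Quotient.mk_eq_zero]
        exact ⟨x - ϖ • w, hv⟩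
      have hϖc : ϖ • c = 0 := htor c ⟨ϖ * ϖ, mul_ne_zero hϖ0 hϖ0, hc0⟩
      rw [hc, ← Submodule.Quotient.mk_smul, Submodule.Quotient.mk_eq_zero] at hϖc
      obtain ⟨t, ht⟩ := hϖc
      refine ⟨x - ϖ • (w + t), ?_, ?_⟩
      · rw [smul_add, ← sub_sub, map_sub, hv, map_smul, ht, mul_smul]
        simp
      · rw [Submodule.Quotient.eq]
        refine (hmem _).mpr ⟨-(w + t), ?_⟩
        rw [smul_neg]
        abel
end

section
/- Let R be a discrete valuation ring with uniformizer ϖ and residue field E = R/(ϖ). Let Π be a finite free R-module, ψ: Π → Π an R-linear map, and ψ̄: Π/ϖΠ → Π/ϖΠ its reduction modulo ϖ; write H¹ = coker ψ, let H¹_tors be its R-torsion submodule and H¹_tf = H¹/H¹_tors. Assume H¹_tors is annihilated by ϖ. Then the image of the Bockstein map β: ker ψ̄ → coker ψ̄ = H¹/ϖH¹ equals the image of H¹_tors under the projection H¹ → H¹/ϖH¹; consequently β induces an E-linear isomorphism coker β ≅ H¹_tf ⊗_R E. -/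
open Pointwise

open scoped TensorProduct

/-- Let `R` be a discrete valuation ring with uniformizer `ϖ` and residue field
`E = R/(ϖ)`.  Let `Π` (here `M`) be a finite free `R`-module, `ψ : M → M` an `R`-linear map
with reduction `ψbar : M/ϖM → M/ϖM`; write `H¹ = coker ψ`, `H¹_tors` its torsion submodule
and `H¹_tf = H¹/H¹_tors`.  Assume `H¹_tors` is annihilated by `ϖ`.  Then the image of the
Bockstein map `β : ker ψbar → coker ψbar = H¹/ϖH¹` (whose values are the classes of the `y`
with `ψ x = ϖ·y`) equals the image of `H¹_tors` under `H¹ → H¹/ϖH¹` (first conjunct), and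
consequently `β` induces an `E`-linear isomorphism `coker β ≅ H¹_tf ⊗_R E` (second
conjunct, stated as an `R`-linear isomorphism sending the class of `t` to
`(t mod torsion) ⊗ 1`; both sides are killed by `ϖ`, so `R`-linearity is equivalent to
`E`-linearity). -/
theorem stmt_6 (R : Type*) [CommRing R] [IsDomain R] [IsDiscreteValuationRing R]
    (ϖ : R) (hϖ : Irreducible ϖ)
    (M : Type*) [AddCommGroup M] [Module R M] [Module.Free R M] [Module.Finite R M]
    (ψ : M →ₗ[R] M)
    (ϖM : Submodule R M) (hϖM : ϖM = ϖ • (⊤ : Submodule R M))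
    (ψbar : (M ⧸ ϖM) →ₗ[R] (M ⧸ ϖM))
    (hψbar : ∀ x : M, ψbar (Submodule.Quotient.mk x) = Submodule.Quotient.mk (ψ x))
    (htors : ∀ c : M ⧸ LinearMap.range ψ, (∃ r : R, r ≠ 0 ∧ r • c = 0) → ϖ • c = 0)
    (imβ : Submodule R ((M ⧸ ϖM) ⧸ LinearMap.range ψbar))
    (himβ : imβ = Submodule.span R {c | ∃ x y : M, ψ x = ϖ • y ∧
        c = Submodule.Quotient.mk (Submodule.Quotient.mk y : M ⧸ ϖM)}) :
    (∀ c : (M ⧸ ϖM) ⧸ LinearMap.range ψbar,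
        (∃ x y : M, ψ x = ϖ • y ∧
            c = Submodule.Quotient.mk (Submodule.Quotient.mk y : M ⧸ ϖM)) ↔
          (∃ t : M, (Submodule.Quotient.mk t : M ⧸ LinearMap.range ψ) ∈
              Submodule.torsion R (M ⧸ LinearMap.range ψ) ∧
            c = Submodule.Quotient.mk (Submodule.Quotient.mk t : M ⧸ ϖM))) ∧
    ∃ e : (((M ⧸ ϖM) ⧸ LinearMap.range ψbar) ⧸ imβ) ≃ₗ[R]
        ((M ⧸ LinearMap.range ψ) ⧸ Submodule.torsion R (M ⧸ LinearMap.range ψ)) ⊗[R]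
          (R ⧸ Ideal.span {ϖ}),
      ∀ t : M,
        e (Submodule.Quotient.mk (Submodule.Quotient.mk
            (Submodule.Quotient.mk t : M ⧸ ϖM))) =
          (Submodule.Quotient.mk (Submodule.Quotient.mk t :
              M ⧸ LinearMap.range ψ)) ⊗ₜ[R] (1 : R ⧸ Ideal.span {ϖ}) := by
  have hϖ0 : ϖ ≠ 0 := hϖ.ne_zero
  -- ϖ-multiples go into ϖM
  have hmemϖM : ∀ m : M, ϖ • m ∈ ϖM := by
    intro m
    rw [hϖM]
    exact Submodule.smul_mem_pointwise_smul m ϖ ⊤ trivial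
  -- torsion classes are killed by ϖ, i.e. ϖ•t ∈ range ψ
  have hkill : ∀ t : M, (Submodule.Quotient.mk t : M ⧸ LinearMap.range ψ) ∈
      Submodule.torsion R (M ⧸ LinearMap.range ψ) → ∃ x : M, ψ x = ϖ • t := by
    intro t ht
    obtain ⟨⟨r, hr⟩, hrt⟩ := ht
    have h0 : ϖ • (Submodule.Quotient.mk t : M ⧸ LinearMap.range ψ) = 0 :=
      htors _ ⟨r, nonZeroDivisors.ne_zero hr, hrt⟩
    rw [← Submodule.Quotient.mk_smul, Submodule.Quotient.mk_eq_zero] at h0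
    obtain ⟨x, hx⟩ := h0
    exact ⟨x, hx⟩
  -- the β-image classes come from torsion
  have htorsmk : ∀ x y : M, ψ x = ϖ • y →
      (Submodule.Quotient.mk y : M ⧸ LinearMap.range ψ) ∈
        Submodule.torsion R (M ⧸ LinearMap.range ψ) := by
    intro x y hxy
    refine ⟨⟨ϖ, mem_nonZeroDivisors_of_ne_zero hϖ0⟩, ?_⟩
    show ϖ • (Submodule.Quotient.mk y : M ⧸ LinearMap.range ψ) = 0
    rw [← Submodule.Quotient.mk_smul, Submodule.Quotient.mk_eq_zero]
    exact ⟨x, hxy⟩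
  constructor
  · intro c
    constructor
    · rintro ⟨x, y, hxy, rfl⟩
      exact ⟨y, htorsmk x y hxy, rfl⟩
    · rintro ⟨t, ht, rfl⟩
      obtain ⟨x, hx⟩ := hkill t ht
      exact ⟨x, t, hx, rfl⟩
  -- notation
  · set H := M ⧸ LinearMap.range ψ
    set T := Submodule.torsion R H with hT
    set Q := H ⧸ T
    set J : Ideal R := Ideal.span {ϖ} with hJ
    set JQ : Submodule R Q := J • ⊤ with hJQ
    -- base map M → Q ⧸ JQ
    set g0 : M →ₗ[R] Q ⧸ JQ := JQ.mkQ ∘ₗ T.mkQ ∘ₗ (LinearMap.range ψ).mkQ with hg0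
    have hg0apply : ∀ m : M, g0 m = Submodule.Quotient.mk (Submodule.Quotient.mk
        (Submodule.Quotient.mk m : H)) := fun m => rfl
    -- forward map, step 1: kill ϖM
    have h1 : ϖM ≤ LinearMap.ker g0 := by
      intro m hm
      rw [hϖM] at hm
      obtain ⟨y, -, rfl⟩ := Set.mem_smul_set.mp hm
      have : g0 (ϖ • y) = ϖ • g0 y := map_smul g0 ϖ y
      rw [LinearMap.mem_ker, this]
      obtain ⟨q, hq⟩ := Submodule.mkQ_surjective JQ (g0 y)
      rw [← hq, ← map_smul, Submodule.mkQ_apply, Submodule.Quotient.mk_eq_zero]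
      exact Submodule.smul_mem_smul (Ideal.mem_span_singleton_self ϖ) trivial
    set f1 : (M ⧸ ϖM) →ₗ[R] Q ⧸ JQ := ϖM.liftQ g0 h1 with hf1
    have hf1apply : ∀ m : M, f1 (Submodule.Quotient.mk m) = g0 m := fun m => rfl
    -- step 2: kill range ψbar
    have h2 : LinearMap.range ψbar ≤ LinearMap.ker f1 := by
      rintro _ ⟨z, rfl⟩
      obtain ⟨x, rfl⟩ := Submodule.Quotient.mk_surjective ϖM z
      rw [LinearMap.mem_ker, hψbar, hf1apply, hg0apply]
      have : (Submodule.Quotient.mk (ψ x) : H) = 0 := by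
        rw [Submodule.Quotient.mk_eq_zero]; exact ⟨x, rfl⟩
      rw [this]; simp
    set f2 : ((M ⧸ ϖM) ⧸ LinearMap.range ψbar) →ₗ[R] Q ⧸ JQ :=
      (LinearMap.range ψbar).liftQ f1 h2 with hf2
    have hf2apply : ∀ z : M ⧸ ϖM, f2 (Submodule.Quotient.mk z) = f1 z := fun z => rfl
    -- step 3: kill imβ
    have h3 : imβ ≤ LinearMap.ker f2 := by
      rw [himβ, Submodule.span_le]
      rintro _ ⟨x, y, hxy, rfl⟩
      rw [SetLike.mem_coe, LinearMap.mem_ker, hf2apply, hf1apply, hg0apply]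
      have : (Submodule.Quotient.mk (Submodule.Quotient.mk y : H) : Q) = 0 := by
        rw [Submodule.Quotient.mk_eq_zero]
        exact htorsmk x y hxy
      rw [this]; simp
    set F : (((M ⧸ ϖM) ⧸ LinearMap.range ψbar) ⧸ imβ) →ₗ[R] Q ⧸ JQ :=
      imβ.liftQ f2 h3 with hF
    have hFapply : ∀ m : M, F (Submodule.Quotient.mk (Submodule.Quotient.mk
        (Submodule.Quotient.mk m : M ⧸ ϖM))) =
        Submodule.Quotient.mk (Submodule.Quotient.mk (Submodule.Quotient.mk m : H)) :=
      fun m => rfl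
    -- backward base map M → LHS
    set k0 : M →ₗ[R] (((M ⧸ ϖM) ⧸ LinearMap.range ψbar) ⧸ imβ) :=
      imβ.mkQ ∘ₗ (LinearMap.range ψbar).mkQ ∘ₗ ϖM.mkQ with hk0
    have hk0apply : ∀ m : M, k0 m = Submodule.Quotient.mk (Submodule.Quotient.mk
        (Submodule.Quotient.mk m : M ⧸ ϖM)) := fun m => rfl
    -- kill range ψ
    have h4 : LinearMap.range ψ ≤ LinearMap.ker k0 := by
      rintro _ ⟨x, rfl⟩
      rw [LinearMap.mem_ker, hk0apply]
      have : (Submodule.Quotient.mk (ψ x) : M ⧸ ϖM) ∈ LinearMap.range ψbar :=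
        ⟨Submodule.Quotient.mk x, hψbar x⟩
      have h5 : (Submodule.Quotient.mk (Submodule.Quotient.mk (ψ x) : M ⧸ ϖM) :
          (M ⧸ ϖM) ⧸ LinearMap.range ψbar) = 0 := by
        rw [Submodule.Quotient.mk_eq_zero]; exact this
      rw [h5]; simp
    set k1 : H →ₗ[R] (((M ⧸ ϖM) ⧸ LinearMap.range ψbar) ⧸ imβ) :=
      (LinearMap.range ψ).liftQ k0 h4 with hk1
    have hk1apply : ∀ m : M, k1 (Submodule.Quotient.mk m) = k0 m := fun m => rfl
    -- kill torsion
    have h6 : T ≤ LinearMap.ker k1 := by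
      intro z hz
      obtain ⟨t, rfl⟩ := Submodule.Quotient.mk_surjective _ z
      obtain ⟨x, hx⟩ := hkill t hz
      rw [LinearMap.mem_ker, hk1apply, hk0apply]
      have : (Submodule.Quotient.mk (Submodule.Quotient.mk t : M ⧸ ϖM) :
          (M ⧸ ϖM) ⧸ LinearMap.range ψbar) ∈ imβ := by
        rw [himβ]
        exact Submodule.subset_span ⟨x, t, hx, rfl⟩
      rw [Submodule.Quotient.mk_eq_zero]
      exact this
    set k2 : Q →ₗ[R] (((M ⧸ ϖM) ⧸ LinearMap.range ψbar) ⧸ imβ) := T.liftQ k1 h6 with hk2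
    have hk2apply : ∀ z : H, k2 (Submodule.Quotient.mk z) = k1 z := fun z => rfl
    -- kill JQ
    have h7 : JQ ≤ LinearMap.ker k2 := by
      rw [hJQ]
      refine Submodule.smul_le.mpr ?_
      intro r hr n _
      obtain ⟨a, rfl⟩ := Ideal.mem_span_singleton'.mp hr
      obtain ⟨z, rfl⟩ := Submodule.Quotient.mk_surjective _ n
      obtain ⟨m, rfl⟩ := Submodule.Quotient.mk_surjective _ z
      rw [LinearMap.mem_ker, map_smul]
      rw [hk2apply, hk1apply, hk0apply]
      have hsm : (a * ϖ) • (Submodule.Quotient.mk (Submodule.Quotient.mk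
          (Submodule.Quotient.mk m : M ⧸ ϖM)) :
          ((M ⧸ ϖM) ⧸ LinearMap.range ψbar) ⧸ imβ) =
          a • Submodule.Quotient.mk (Submodule.Quotient.mk
            (Submodule.Quotient.mk (ϖ • m) : M ⧸ ϖM)) := by
        simp only [mul_smul, ← Submodule.Quotient.mk_smul]
      rw [hsm]
      have : (Submodule.Quotient.mk (ϖ • m) : M ⧸ ϖM) = 0 := by
        rw [Submodule.Quotient.mk_eq_zero]; exact hmemϖM m
      simp [this]
    set G : Q ⧸ JQ →ₗ[R] (((M ⧸ ϖM) ⧸ LinearMap.range ψbar) ⧸ imβ) :=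
      JQ.liftQ k2 h7 with hG
    have hGapply : ∀ m : M, G (Submodule.Quotient.mk (Submodule.Quotient.mk
        (Submodule.Quotient.mk m : H))) = Submodule.Quotient.mk (Submodule.Quotient.mk
        (Submodule.Quotient.mk m : M ⧸ ϖM)) := fun m => rfl
    -- the equivalence
    have hGF : G ∘ₗ F = LinearMap.id := by
      apply LinearMap.ext
      intro c
      obtain ⟨c, rfl⟩ := Submodule.Quotient.mk_surjective _ c
      obtain ⟨c, rfl⟩ := Submodule.Quotient.mk_surjective _ c
      obtain ⟨m, rfl⟩ := Submodule.Quotient.mk_surjective _ c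
      rfl
    have hFG : F ∘ₗ G = LinearMap.id := by
      apply LinearMap.ext
      intro c
      obtain ⟨c, rfl⟩ := Submodule.Quotient.mk_surjective _ c
      obtain ⟨c, rfl⟩ := Submodule.Quotient.mk_surjective _ c
      obtain ⟨m, rfl⟩ := Submodule.Quotient.mk_surjective _ c
      rfl
    set e1 : (((M ⧸ ϖM) ⧸ LinearMap.range ψbar) ⧸ imβ) ≃ₗ[R] Q ⧸ JQ :=
      LinearEquiv.ofLinear F G hFG hGF with he1
    refine ⟨e1.trans (TensorProduct.tensorQuotEquivQuotSMul Q J).symm, ?_⟩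
    intro t
    have h8 : e1 (Submodule.Quotient.mk (Submodule.Quotient.mk
        (Submodule.Quotient.mk t : M ⧸ ϖM))) =
        Submodule.Quotient.mk (Submodule.Quotient.mk (Submodule.Quotient.mk t : H)) :=
      hFapply t
    rw [LinearEquiv.trans_apply, h8]
    exact TensorProduct.tensorQuotEquivQuotSMul_symm_mk J _
end

section
/- Let R be a discrete valuation ring with fraction field Q, let Π be a finite free R-module, and let U ⊆ Π be an R-submodule which is a direct summand of Π. Then for every non-negative integer r the natural maps ⋀^r_R U → ⋀^r_R Π → Q ⊗_R ⋀^r_R Π are injective, and inside Q ⊗_R ⋀^r_R Π the image of ⋀^r_R U is equal to the intersection of the Q-subspace Q ⊗_R ⋀^r_R U with the image of ⋀^r_R Π. -/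
open ExteriorAlgebra

namespace StmtAux

variable {R : Type*} [CommRing R] {n : ℕ}

/-- The Fock space: free module with basis indexed by subsets of `Fin n`. -/
abbrev W (R : Type*) (n : ℕ) := Finset (Fin n) → R

/-- Creation operator. -/
noncomputable def crea (R : Type*) [CommRing R] {n : ℕ} (i : Fin n) :
    Module.End R (W R n) where
  toFun w T := if i ∈ T then (-1 : R) ^ ((T.filter (· < i)).card) * w (T.erase i) else 0
  map_add' w₁ w₂ := by
    funext T
    by_cases h : i ∈ T <;> simp [h, mul_add]
  map_smul' c w := by
    funext T
    by_cases h : i ∈ T <;> simp [h, Pi.smul_apply, smul_eq_mul] <;> ring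

lemma crea_sq (i : Fin n) : crea R i * crea R i = 0 := by
  apply LinearMap.ext
  intro w
  funext T
  simp only [Module.End.mul_apply, crea, LinearMap.coe_mk, AddHom.coe_mk, LinearMap.zero_apply,
    Pi.zero_apply]
  by_cases h : i ∈ T
  · simp [h, Finset.notMem_erase]
  · simp [h]

private lemma erase_comm' (T : Finset (Fin n)) (i j : Fin n) :
    (T.erase i).erase j = (T.erase j).erase i := by
  ext x
  simp only [Finset.mem_erase]
  tauto

private lemma card_filter_erase {T : Finset (Fin n)} {i j : Fin n} (hi : i ∈ T) (hij : i ≠ j) :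
    (T.filter (· < j)).card =
      ((T.erase i).filter (· < j)).card + (if i < j then 1 else 0) := by
  rw [Finset.filter_erase]
  by_cases hlt : i < j
  · have hmem : i ∈ T.filter (· < j) := Finset.mem_filter.2 ⟨hi, hlt⟩
    rw [if_pos hlt, Finset.card_erase_of_mem hmem]
    have : 0 < (T.filter (· < j)).card := Finset.card_pos.2 ⟨i, hmem⟩
    omega
  · rw [if_neg hlt, Finset.erase_eq_of_notMem (by simp [Finset.mem_filter, hlt]), add_zero]

lemma crea_anticomm (i j : Fin n) : crea R i * crea R j + crea R j * crea R i = 0 := by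
  by_cases hij : i = j
  · subst hij
    rw [crea_sq, add_zero]
  apply LinearMap.ext
  intro w
  funext T
  simp only [LinearMap.add_apply, Module.End.mul_apply, crea, LinearMap.coe_mk, AddHom.coe_mk,
    LinearMap.zero_apply, Pi.add_apply, Pi.zero_apply]
  by_cases hi : i ∈ T <;> by_cases hj : j ∈ T
  · have hji : j ∈ T.erase i := Finset.mem_erase.2 ⟨Ne.symm hij, hj⟩
    have hij' : i ∈ T.erase j := Finset.mem_erase.2 ⟨hij, hi⟩
    rw [if_pos hi, if_pos hj, if_pos hji, if_pos hij', erase_comm' T j i]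
    have h1 := card_filter_erase (T := T) (i := j) (j := i) hj (Ne.symm hij)
    have h2 := card_filter_erase (T := T) (i := i) (j := j) hi hij
    rw [h1, h2]
    rcases lt_or_gt_of_ne hij with h | h
    · rw [if_pos h, if_neg (asymm h)]
      ring_nf
    · rw [if_neg (asymm h), if_pos h]
      ring_nf
  · have : j ∉ T.erase i := fun hc => hj (Finset.mem_of_mem_erase hc)
    simp [hi, hj, this]
  · have : i ∉ T.erase j := fun hc => hi (Finset.mem_of_mem_erase hc)
    simp [hi, hj, this]
  · simp [hi, hj]

lemma sum_sq_zero {A : Type*} [Ring A] {ι' : Type*} (s : Finset ι') (g : ι' → A)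
    (h : ∀ i j, g i * g j + g j * g i = 0) (hsq : ∀ i, g i * g i = 0) :
    (∑ i ∈ s, g i) * (∑ i ∈ s, g i) = 0 := by
  classical
  induction s using Finset.induction_on with
  | empty => simp
  | insert k s hk ih =>
    have h1 : g k * (∑ i ∈ s, g i) + (∑ i ∈ s, g i) * g k = 0 := by
      rw [Finset.mul_sum, Finset.sum_mul, ← Finset.sum_add_distrib]
      exact Finset.sum_eq_zero fun i _ => h k i
    rw [Finset.sum_insert hk, add_mul, mul_add, mul_add, hsq k, ih, add_zero, zero_add]
    exact h1
variable {M : Type*} [AddCommGroup M] [Module R M] (b : Module.Basis (Fin n) R M)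

/-- The action of `M` on Fock space by creation operators. -/
noncomputable def fock : M →ₗ[R] Module.End R (W R n) :=
  b.constr R fun i => crea R i

lemma fock_sq (m : M) : fock b m * fock b m = 0 := by
  rw [show fock b m = ∑ i, b.equivFun m i • crea R i from b.constr_apply_fintype R _ m]
  apply sum_sq_zero
  · intro i j
    rw [smul_mul_smul_comm, smul_mul_smul_comm, mul_comm (b.equivFun m j), ← smul_add,
      crea_anticomm, smul_zero]
  · intro i
    rw [smul_mul_smul_comm, crea_sq, smul_zero]

/-- The induced algebra homomorphism from the exterior algebra. -/
noncomputable def fockHom : ExteriorAlgebra R M →ₐ[R] Module.End R (W R n) :=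
  ExteriorAlgebra.lift R ⟨fock b, fock_sq b⟩

@[simp] lemma fockHom_ι (i : Fin n) : fockHom b (ι R (b i)) = crea R i := by
  rw [fockHom, ExteriorAlgebra.lift_ι_apply, fock, b.constr_basis]

/-- Delta function on Fock space. -/
noncomputable def dE (T : Finset (Fin n)) : W R n := fun S => if S = T then 1 else 0

/-- Evaluation of the Fock representation at the vacuum vector. -/
noncomputable def Psi : ExteriorAlgebra R M →ₗ[R] W R n :=
  (LinearMap.applyₗ (dE (R := R) ∅)).comp (fockHom b).toLinearMap

lemma Psi_apply (x : ExteriorAlgebra R M) : Psi b x = fockHom b x (dE ∅) := rfl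

/-- Monomial associated to a list of indices. -/
noncomputable def eL (l : List (Fin n)) : ExteriorAlgebra R M :=
  (l.map fun i => ι R (b i)).prod

@[simp] lemma eL_nil : eL b ([] : List (Fin n)) = 1 := rfl

lemma eL_cons (i : Fin n) (l : List (Fin n)) : eL b (i :: l) = ι R (b i) * eL b l := by
  simp [eL]

lemma eL_append (l₁ l₂ : List (Fin n)) : eL b (l₁ ++ l₂) = eL b l₁ * eL b l₂ := by
  simp [eL]

/-- Monomial associated to a finset of indices. -/
noncomputable def eT (T : Finset (Fin n)) : ExteriorAlgebra R M :=
  eL b (T.sort (· ≤ ·))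

lemma ι_mul_eL (l : List (Fin n)) (hl : l.Pairwise (· < ·)) (i : Fin n) :
    ι R (b i) * eL b l =
      if i ∈ l then 0 else
        ((-1 : R) ^ (l.takeWhile (· < i)).length) • eL b (List.orderedInsert (· ≤ ·) i l) := by
  induction l with
  | nil => simp [eL]
  | cons j l ih =>
    obtain ⟨hjl, hl'⟩ := List.pairwise_cons.1 hl
    rcases lt_trichotomy i j with h | h | h
    · have hmem : i ∉ j :: l := by
        intro hc
        rcases List.mem_cons.1 hc with rfl | hc
        · exact lt_irrefl i h
        · exact lt_irrefl i (h.trans (hjl i hc))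
      rw [if_neg hmem]
      have : List.orderedInsert (· ≤ ·) i (j :: l) = i :: j :: l := by
        simp [List.orderedInsert, h.le]
      rw [this]
      have : (j :: l).takeWhile (· < i) = [] := by
        simp [List.takeWhile, show ¬ (j < i) from asymm h]
      rw [this]
      simp [eL_cons, List.length_nil, pow_zero, one_smul]
    · subst h
      rw [if_pos (List.mem_cons_self (a := i) (l := l)), eL_cons, ← mul_assoc, ι_sq_zero, zero_mul]
    · have hne : i ≠ j := ne_of_gt h
      have hanti : ι R (b i) * ι R (b j) = -(ι R (b j) * ι R (b i)) :=
        eq_neg_of_add_eq_zero_left (ι_add_mul_swap _ _)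
      rw [eL_cons, ← mul_assoc, hanti, neg_mul, mul_assoc, ih hl']
      have htake : (j :: l).takeWhile (· < i) = j :: l.takeWhile (· < i) := by
        simp [List.takeWhile, h]
      have hins : List.orderedInsert (· ≤ ·) i (j :: l) =
          j :: List.orderedInsert (· ≤ ·) i l := by
        simp [List.orderedInsert, show ¬ (i ≤ j) from not_le.2 h]
      by_cases him : i ∈ l
      · rw [if_pos him, if_pos (List.mem_cons_of_mem j him), mul_zero, neg_zero]
      · have : i ∉ j :: l := by
          intro hc
          rcases List.mem_cons.1 hc with rfl | hc
          · exact hne rfl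
          · exact him hc
        rw [if_neg him, if_neg this, htake, hins, eL_cons, mul_smul_comm, ← neg_smul]
        congr 1
        rw [List.length_cons, pow_succ]
        ring
/-- The span of the standard monomials. -/
noncomputable def N : Submodule R (ExteriorAlgebra R M) :=
  Submodule.span R (Set.range (eT b))

lemma eT_mem (T : Finset (Fin n)) : eT b T ∈ N b := Submodule.subset_span ⟨T, rfl⟩

lemma sort_orderedInsert (i : Fin n) (T : Finset (Fin n)) (hiT : i ∉ T) :
    List.orderedInsert (· ≤ ·) i (T.sort (· ≤ ·)) = (insert i T).sort (· ≤ ·) := by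
  refine List.Perm.eq_of_pairwise' ((Finset.pairwise_sort _ _).orderedInsert i _)
    (Finset.pairwise_sort _ _) ?_
  have p1 : (List.orderedInsert (· ≤ ·) i (T.sort (· ≤ ·))).Perm (i :: T.sort (· ≤ ·)) :=
    List.perm_orderedInsert _ i _
  have p2 : (i :: T.sort (· ≤ ·)).Perm (i :: T.toList) :=
    List.Perm.cons i (Finset.sort_perm_toList T _)
  have p3 : (i :: T.toList).Perm ((insert i T).toList) := (Finset.toList_insert hiT).symm
  have p4 : ((insert i T).toList).Perm ((insert i T).sort (· ≤ ·)) :=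
    (Finset.sort_perm_toList _ _).symm
  exact ((p1.trans p2).trans p3).trans p4

lemma ι_mul_mem (i : Fin n) {x : ExteriorAlgebra R M} (hx : x ∈ N b) :
    ι R (b i) * x ∈ N b := by
  induction hx using Submodule.span_induction with
  | mem x hxm =>
    obtain ⟨T, rfl⟩ := hxm
    rw [eT, ι_mul_eL b _ (Finset.sortedLT_sort T).pairwise i]
    split_ifs with h
    · exact (N b).zero_mem
    · have hiT : i ∉ T := fun hc => h ((Finset.mem_sort _).2 hc)
      rw [sort_orderedInsert i T hiT]
      exact (N b).smul_mem _ (eT_mem b (insert i T))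
  | zero => rw [mul_zero]; exact (N b).zero_mem
  | add x y hx hy ihx ihy => rw [mul_add]; exact (N b).add_mem ihx ihy
  | smul a x hx ihx => rw [mul_smul_comm]; exact (N b).smul_mem a ihx

lemma eL_mem (l : List (Fin n)) : eL b l ∈ N b := by
  induction l with
  | nil =>
    have h := eT_mem b (∅ : Finset (Fin n))
    rwa [eT, Finset.sort_empty] at h
  | cons i l ih => rw [eL_cons]; exact ι_mul_mem b i ih

lemma N_mul_mem {x y : ExteriorAlgebra R M} (hx : x ∈ N b) (hy : y ∈ N b) : x * y ∈ N b := by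
  induction hx using Submodule.span_induction with
  | mem x hxm =>
    obtain ⟨T, rfl⟩ := hxm
    induction hy using Submodule.span_induction with
    | mem y hym =>
      obtain ⟨S, rfl⟩ := hym
      rw [eT, eT, ← eL_append]
      exact eL_mem b _
    | zero => rw [mul_zero]; exact (N b).zero_mem
    | add y z _ _ ih1 ih2 => rw [mul_add]; exact (N b).add_mem ih1 ih2
    | smul a y _ ih => rw [mul_smul_comm]; exact (N b).smul_mem a ih
  | zero => rw [zero_mul]; exact (N b).zero_mem
  | add x z _ _ ih1 ih2 => rw [add_mul]; exact (N b).add_mem ih1 ih2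
  | smul a x _ ih => rw [smul_mul_assoc]; exact (N b).smul_mem a ih

lemma N_eq_top : N b = ⊤ := by
  rw [eq_top_iff]
  intro x hxtop
  clear hxtop
  induction x using ExteriorAlgebra.induction with
  | algebraMap r =>
    rw [Algebra.algebraMap_eq_smul_one]
    exact (N b).smul_mem r (eL_mem b [])
  | ι m =>
    rw [← b.sum_equivFun m, map_sum]
    refine (N b).sum_mem fun i _ => ?_
    rw [map_smul]
    refine (N b).smul_mem _ ?_
    have : ι R (b i) = eL b [i] := by simp [eL]
    exact this ▸ eL_mem b [i]
  | mul x y hx hy => exact N_mul_mem b hx hy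
  | add x y hx hy => exact (N b).add_mem hx hy

lemma crea_dE {i : Fin n} {T : Finset (Fin n)} (hiT : i ∉ T) :
    crea R i (dE T) =
      ((-1 : R) ^ (((insert i T).filter (· < i)).card)) • dE (insert i T) := by
  funext S
  simp only [crea, LinearMap.coe_mk, AddHom.coe_mk, dE, Pi.smul_apply, smul_eq_mul]
  by_cases hS : S = insert i T
  · subst hS
    rw [if_pos (Finset.mem_insert_self i T), if_pos (Finset.erase_insert hiT), if_pos rfl]
  · rw [if_neg hS, mul_zero]
    by_cases hiS : i ∈ S
    · rw [if_pos hiS]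
      have : S.erase i ≠ T := fun hc => hS (by rw [← hc, Finset.insert_erase hiS])
      rw [if_neg this, mul_zero]
    · rw [if_neg hiS]

lemma Psi_eL (l : List (Fin n)) (hl : l.Pairwise (· < ·)) :
    ∃ s : R, s * s = 1 ∧ Psi b (eL b l) = s • dE l.toFinset := by
  induction l with
  | nil =>
    refine ⟨1, one_mul 1, ?_⟩
    rw [Psi_apply, eL_nil, map_one, List.toFinset_nil, one_smul]
    rfl
  | cons i l ih =>
    obtain ⟨hil, hl'⟩ := List.pairwise_cons.1 hl
    obtain ⟨s, hs1, hs2⟩ := ih hl'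
    have hiT : i ∉ l.toFinset := by
      intro hc
      exact lt_irrefl i (hil i (List.mem_toFinset.1 hc))
    set k := ((insert i l.toFinset).filter (· < i)).card
    refine ⟨s * (-1) ^ k, ?_, ?_⟩
    · have : ((-1 : R) ^ k) * ((-1) ^ k) = 1 := by
        rw [← pow_add]
        exact Even.neg_one_pow ⟨k, rfl⟩
      calc s * (-1) ^ k * (s * (-1) ^ k) = (s * s) * ((-1) ^ k * (-1) ^ k) := by ring
        _ = 1 := by rw [hs1, this, one_mul]
    · rw [Psi_apply, eL_cons, map_mul, Module.End.mul_apply, ← Psi_apply, hs2, map_smul,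
        fockHom_ι, crea_dE hiT, List.toFinset_cons, smul_smul]

lemma Psi_injective : Function.Injective (Psi b) := by
  rw [← LinearMap.ker_eq_bot, eq_bot_iff]
  intro x hx
  have hxmem : x ∈ Submodule.span R (Set.range (eT b)) := by
    rw [← N, N_eq_top b]; trivial
  obtain ⟨c, hc⟩ := (Submodule.mem_span_range_iff_exists_fun R).1 hxmem
  have hval : ∀ T : Finset (Fin n), ∃ s : R, s * s = 1 ∧ Psi b (eT b T) = s • dE T := by
    intro T
    obtain ⟨s, hs1, hs2⟩ := Psi_eL b (T.sort (· ≤ ·)) (Finset.sortedLT_sort T).pairwise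
    exact ⟨s, hs1, by rwa [Finset.sort_toFinset] at hs2⟩
  choose s hs1 hs2 using hval
  have hPsi : Psi b x = 0 := hx
  rw [← hc, map_sum] at hPsi
  have heach : ∀ T, Psi b (c T • eT b T) = (c T * s T) • dE T := by
    intro T
    rw [map_smul, hs2, smul_smul]
  rw [Finset.sum_congr rfl fun T _ => heach T] at hPsi
  have hcoef : ∀ T₀ : Finset (Fin n), c T₀ * s T₀ = 0 := by
    intro T₀
    have h := congrFun hPsi T₀
    rw [Finset.sum_apply] at h
    simp only [Pi.smul_apply, dE, smul_eq_mul, mul_ite, mul_one, mul_zero,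
      Finset.sum_ite_eq, Finset.mem_univ, if_true] at h
    exact h
  have hczero : ∀ T, c T = 0 := by
    intro T
    have := hcoef T
    have h2 : c T * s T * s T = 0 := by rw [this, zero_mul]
    rwa [mul_assoc, hs1, mul_one] at h2
  show x = 0
  rw [← hc]
  simp [hczero]
lemma noZeroSMulDivisors_exterior [NoZeroSMulDivisors R R] (b : Module.Basis (Fin n) R M) :
    NoZeroSMulDivisors R (ExteriorAlgebra R M) := by
  constructor
  intro c x h
  have h2 : c • Psi b x = 0 := by rw [← map_smul, h, map_zero]
  rcases (show c = 0 ∨ Psi b x = 0 by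
    by_cases hc : c = 0
    · exact Or.inl hc
    · exact Or.inr (funext fun T =>
        (eq_zero_or_eq_zero_of_smul_eq_zero (show c • Psi b x T = 0 from congrFun h2 T)).resolve_left hc)) with hc | hx
  · exact Or.inl hc
  · exact Or.inr (Psi_injective b (by rw [hx, map_zero]))

private lemma pow_mono {A : Type*} [Semiring A] [Algebra R A] {P P' : Submodule R A}
    (h : P ≤ P') (k : ℕ) : P ^ k ≤ P' ^ k := by
  induction k with
  | zero => rw [pow_zero, pow_zero]
  | succ k ih => rw [pow_succ, pow_succ]; exact mul_le_mul' ih h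

end StmtAux

open StmtAux in

/-- Let `R` be a discrete valuation ring with fraction field `Q`, `M` a finite free
`R`-module, and `U ⊆ M` an `R`-submodule which is a direct summand of `M`.  Let
`F : ⋀^r U → ⋀^r M` be the natural map on `r`-th exterior powers induced by the inclusion
`U ⊆ M` (characterised by the hypothesis `hF` via the functorial map of exterior algebras).
Then `F` and the natural map `⋀^r M → Q ⊗_R ⋀^r M`, `z ↦ 1 ⊗ z`, are injective, and inside
`Q ⊗_R ⋀^r M` the image of `⋀^r U` equals the intersection of the `Q`-subspace
`Q ⊗_R ⋀^r U` (the range of the base change of `F`) with the image of `⋀^r M`. -/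
theorem stmt_7 (R : Type*) [CommRing R] [IsDomain R] [IsDiscreteValuationRing R]
    (Q : Type*) [Field Q] [Algebra R Q] [IsFractionRing R Q]
    (M : Type*) [AddCommGroup M] [Module R M] [Module.Free R M] [Module.Finite R M]
    (U : Submodule R M) (hU : ∃ V : Submodule R M, IsCompl U V) (r : ℕ)
    (F : (⋀[R]^r U) →ₗ[R] (⋀[R]^r M))
    (hF : ∀ x : ⋀[R]^r U,
      (F x : ExteriorAlgebra R M) = ExteriorAlgebra.map U.subtype (x : ExteriorAlgebra R U)) :
    Function.Injective F ∧
    Function.Injective ((TensorProduct.mk R Q (⋀[R]^r M)) 1) ∧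
    LinearMap.range (((TensorProduct.mk R Q (⋀[R]^r M)) 1).comp F) =
      (LinearMap.range (LinearMap.baseChange Q F)).restrictScalars R ⊓
        LinearMap.range ((TensorProduct.mk R Q (⋀[R]^r M)) 1) := by
  classical
  obtain ⟨V, hV⟩ := hU
  set p := U.linearProjOfIsCompl V hV with hp
  have hps : p ∘ₗ U.subtype = LinearMap.id := by
    ext u
    simp [hp, Submodule.linearProjOfIsCompl, Submodule.projectionOnto_apply_left]
  -- the retraction on exterior powers
  have hmapmem : ∀ y : ⋀[R]^r M, ExteriorAlgebra.map p y.1 ∈ ⋀[R]^r U := by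
    intro y
    have h1 : (ExteriorAlgebra.map p).toLinearMap y.1 ∈
        Submodule.map (ExteriorAlgebra.map p).toLinearMap (⋀[R]^r M) :=
      Submodule.mem_map_of_mem y.2
    rw [Submodule.map_pow, ExteriorAlgebra.ι_range_map_map] at h1
    have hle : Submodule.map (ExteriorAlgebra.ι R) (LinearMap.range p) ≤
        LinearMap.range (ExteriorAlgebra.ι R (M := U)) := by
      rintro _ ⟨u, -, rfl⟩
      exact ⟨u, rfl⟩
    exact pow_mono hle r h1
  set G : (⋀[R]^r M) →ₗ[R] (⋀[R]^r U) :=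
    LinearMap.codRestrict (⋀[R]^r U)
      ((ExteriorAlgebra.map p).toLinearMap.domRestrict (⋀[R]^r M)) hmapmem with hG
  have hGF : ∀ x, G (F x) = x := by
    intro x
    apply Subtype.ext
    have hcoe : (G (F x)).1 = ExteriorAlgebra.map p (F x).1 := rfl
    rw [hcoe, hF x, ← AlgHom.comp_apply, ExteriorAlgebra.map_comp_map, hps,
      ExteriorAlgebra.map_id]
    rfl
  have hGFcomp : G ∘ₗ F = LinearMap.id := LinearMap.ext hGF
  -- injectivity of the localization map
  haveI : NoZeroSMulDivisors R (ExteriorAlgebra R M) :=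
    noZeroSMulDivisors_exterior (Module.finBasis R M)
  haveI : Module.Finite R (⋀[R]^r M) := by
    rw [Module.Finite.iff_fg]
    refine Submodule.FG.pow ?_ r
    rw [LinearMap.range_eq_map]
    exact Submodule.FG.map _ (Module.finite_def.mp ‹Module.Finite R M›)
  haveI : Module.Free R (⋀[R]^r M) := Module.free_of_finite_type_torsion_free'
  haveI : Module.Flat R (⋀[R]^r M) := Module.Flat.of_free
  have hmkinj : Function.Injective ((TensorProduct.mk R Q (⋀[R]^r M)) 1) := by
    have heq : ((TensorProduct.mk R Q (⋀[R]^r M)) 1) =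
        (LinearMap.rTensor (⋀[R]^r M) (Algebra.linearMap R Q)).comp
          (TensorProduct.lid R (⋀[R]^r M)).symm.toLinearMap := by
      apply LinearMap.ext
      intro x
      simp [TensorProduct.mk_apply, TensorProduct.lid_symm_apply, LinearMap.rTensor_tmul]
    rw [heq]
    simp only [LinearMap.coe_comp, LinearEquiv.coe_coe]
    exact (Module.Flat.rTensor_preserves_injective_linearMap _
      (IsFractionRing.injective R Q)).comp (TensorProduct.lid R _).symm.injective
  refine ⟨Function.LeftInverse.injective hGF, hmkinj, ?_⟩
  apply le_antisymm
  · rintro z ⟨a, rfl⟩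
    refine Submodule.mem_inf.2 ⟨?_, ⟨F a, rfl⟩⟩
    rw [Submodule.restrictScalars_mem]
    exact ⟨1 ⊗ₜ a, by rw [LinearMap.baseChange_tmul]; rfl⟩
  · rintro z hz
    rw [Submodule.mem_inf] at hz
    obtain ⟨hz1, hz2⟩ := hz
    rw [Submodule.restrictScalars_mem] at hz1
    obtain ⟨q, hq⟩ := hz1
    obtain ⟨m, hm⟩ := hz2
    refine ⟨G m, ?_⟩
    have h2 : (LinearMap.baseChange Q G) z = q := by
      rw [← hq, ← LinearMap.comp_apply, ← LinearMap.baseChange_comp, hGFcomp,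
        LinearMap.baseChange_id, LinearMap.id_apply]
    have h3 : (LinearMap.baseChange Q G) z = 1 ⊗ₜ[R] (G m) := by
      rw [← hm]
      exact LinearMap.baseChange_tmul _ _ _
    have hq2 : q = 1 ⊗ₜ[R] G m := by rw [← h2, h3]
    have hz' : z = 1 ⊗ₜ[R] (F (G m)) := by
      rw [← hq, hq2, LinearMap.baseChange_tmul]
    rw [LinearMap.comp_apply, hz']
    rfl
end

section
/- Let p be a prime, let E be a finite unramified extension of ℚ_p with ring of integers 𝒪, and let P be a finite abelian group of p-power order. Set Λ := 𝒪[P][[T]], the ring of formal power series over the group algebra 𝒪[P], and let 𝔭 be the ideal of Λ generated by the radical √(p𝒪[P]). Then 𝔭 is a prime ideal of Λ, every element of Λ ∖ 𝔭 is a non-zero-divisor of Λ, and the canonical ring homomorphism Q(Λ) → Q(Λ_𝔭) from the total quotient ring of Λ to the total quotient ring of the localization Λ_𝔭 is an isomorphism. -/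
private theorem aux_reduced' (A : Type*) [CommRing A] [IsSemisimpleRing A] : IsReduced A := by
  constructor
  rintro x ⟨m, hm⟩
  cases m with
  | zero =>
    have h01 : (1 : A) = 0 := by simpa using hm
    rw [← mul_one x, h01, mul_zero]
  | succ k =>
    obtain ⟨e, he, hspan⟩ := IsSemisimpleRing.ideal_eq_span_idempotent (Ideal.span {x})
    have hex : e ∈ Ideal.span {x} := hspan ▸ Ideal.subset_span rfl
    have hxe : x ∈ Ideal.span {e} := hspan ▸ Ideal.subset_span rfl
    obtain ⟨c, hc⟩ := Ideal.mem_span_singleton'.mp hex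
    obtain ⟨d, hd⟩ := Ideal.mem_span_singleton'.mp hxe
    have he0 : e = 0 := by
      have h1 : e ^ (k + 1) = 0 := by rw [← hc, mul_pow, hm, mul_zero]
      rw [he.pow_succ_eq] at h1
      exact h1
    rw [← hd, he0, mul_zero]

open PowerSeries in
private theorem aux_mem_map_C' {R : Type*} [CommRing R] (I : Ideal R) (hI : I.FG)
    (f : PowerSeries R) (hf : ∀ k, PowerSeries.coeff k f ∈ I) :
    f ∈ Ideal.map PowerSeries.C I := by
  obtain ⟨s, hs⟩ := hI
  have h : ∀ k : ℕ, ∃ c : R → R, (∑ i ∈ s, c i • i) = PowerSeries.coeff k f := by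
    intro k
    exact (Submodule.mem_span_finset.mp
      (by rw [show (Submodule.span R (s : Set R)) = I from hs]; exact hf k)).imp fun _ h => h.2
  choose c hc using h
  have : f = ∑ a ∈ s, PowerSeries.C a * PowerSeries.mk (fun k => c k a) := by
    ext k
    rw [map_sum]
    simp only [coeff_C_mul, coeff_mk]
    rw [← hc k]
    simp [smul_eq_mul, mul_comm]
  rw [this]
  refine Ideal.sum_mem _ fun a ha => Ideal.mul_mem_right _ _ (Ideal.mem_map_of_mem _ ?_)
  rw [← hs]; exact Ideal.subset_span ha

universe u' v'

private theorem aux_red' (𝒪 : Type u') [CommRing 𝒪] [IsDomain 𝒪] [CharZero 𝒪]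
    (P : Type v') [CommGroup P] [Finite P] : IsReduced (MonoidAlgebra 𝒪 P) := by
  let K : Type (max u' v') := ULift.{v'} (FractionRing 𝒪)
  haveI : CharZero (FractionRing 𝒪) := by
    constructor
    intro a b hab
    have : algebraMap 𝒪 (FractionRing 𝒪) (a : 𝒪) = algebraMap 𝒪 (FractionRing 𝒪) (b : 𝒪) := by
      rw [map_natCast, map_natCast]; exact_mod_cast hab
    exact_mod_cast IsFractionRing.injective 𝒪 (FractionRing 𝒪) this
  haveI : CharZero K := by
    constructor
    intro a b hab
    have : ((a : ℕ) : FractionRing 𝒪) = b := congrArg ULift.down hab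
    exact_mod_cast this
  let P' : Type (max u' v') := Shrink.{max u' v'} P
  letI : Fintype P' := Fintype.ofFinite P'
  haveI : NeZero ((Fintype.card P' : K)) := ⟨Nat.cast_ne_zero.mpr Fintype.card_ne_zero⟩
  haveI hss : IsSemisimpleRing (MonoidAlgebra K P') := inferInstance
  haveI : IsReduced (MonoidAlgebra K P') := aux_reduced' _
  let e : P ≃* P' := { equivShrink P with map_mul' := equivShrink_mul }
  let ψ : MonoidAlgebra 𝒪 P →ₐ[𝒪] MonoidAlgebra K P' :=
    MonoidAlgebra.lift 𝒪 (MonoidAlgebra K P') P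
      ((MonoidAlgebra.of K P').comp e.toMonoidHom)
  have hcoeff : ∀ (x : MonoidAlgebra 𝒪 P) (g : P), (ψ x).coeff (e g) = algebraMap 𝒪 K (x.coeff g) := by
    intro x g
    induction x using MonoidAlgebra.induction_linear with
    | zero => simp
    | add f₁ f₂ hf₁ hf₂ =>
      rw [map_add, MonoidAlgebra.coeff_add, MonoidAlgebra.coeff_add, Finsupp.add_apply,
        Finsupp.add_apply, map_add, hf₁, hf₂]
    | single g₀ a =>
      rw [MonoidAlgebra.lift_single]
      show (a • MonoidAlgebra.single (e g₀) (1 : K)).coeff (e g) = _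
      rw [MonoidAlgebra.coeff_smul_apply]
      rw [MonoidAlgebra.coeff_single, MonoidAlgebra.coeff_single]
      classical
      rw [Finsupp.single_apply, Finsupp.single_apply]
      by_cases hgg : g₀ = g
      · rw [if_pos hgg, if_pos (congrArg e hgg), Algebra.smul_def, mul_one]
      · rw [if_neg hgg, if_neg ((e.injective.ne_iff).mpr hgg), smul_zero, map_zero]
  constructor
  intro x hx
  have h0 : ψ x = 0 := (hx.map ψ.toRingHom).eq_zero
  ext g
  have h1 : algebraMap 𝒪 K (x.coeff g) = 0 := by
    rw [← hcoeff, h0]; rfl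
  have h2 : Function.Injective (algebraMap 𝒪 K) := by
    intro a b hab
    apply IsFractionRing.injective 𝒪 (FractionRing 𝒪)
    exact congrArg ULift.down hab
  simpa using h2 (by simpa using h1)

open MonoidAlgebra in
private theorem aux_local' (p : ℕ) [Fact p.Prime]
    (𝒪 : Type*) [CommRing 𝒪] [IsDomain 𝒪] [CharZero 𝒪] [IsLocalRing 𝒪]
    [Algebra ℤ_[p] 𝒪] [Module.Finite ℤ_[p] 𝒪]
    (h𝒪 : IsLocalRing.maximalIdeal 𝒪 = Ideal.span {(p : 𝒪)})
    (P : Type*) [CommGroup P] [Finite P] (n : ℕ) (hP : Nat.card P = p ^ n) :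
    (Ideal.span {(p : MonoidAlgebra 𝒪 P)}).radical.IsMaximal ∧
      ∀ q : Ideal (MonoidAlgebra 𝒪 P), q.IsPrime →
        q ≤ (Ideal.span {(p : MonoidAlgebra 𝒪 P)}).radical := by
  set R := MonoidAlgebra 𝒪 P with hR
  set I₀ : Ideal 𝒪 := Ideal.span {(p : 𝒪)} with hI₀
  have hI₀max : I₀.IsMaximal := h𝒪 ▸ IsLocalRing.maximalIdeal.isMaximal 𝒪
  letI : Field (𝒪 ⧸ I₀) := Ideal.Quotient.field I₀
  set ε : R →ₐ[𝒪] 𝒪 := MonoidAlgebra.lift 𝒪 𝒪 P 1 with hε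
  set φ : R →+* (𝒪 ⧸ I₀) := (Ideal.Quotient.mk I₀).comp ε.toRingHom with hφ
  set I : Ideal R := (Ideal.span {(p : R)}).radical with hI
  have hφp : φ (p : R) = 0 := by
    rw [map_natCast, ← map_natCast (Ideal.Quotient.mk I₀) p, Ideal.Quotient.eq_zero_iff_mem]
    exact Ideal.subset_span rfl
  have hpspan : (p : R) ∈ Ideal.span {(p : R)} := Ideal.subset_span rfl
  have hpnonunit : (p : R) ∈ nonunits R := by
    intro h
    have := h.map φ
    rw [hφp] at this
    exact not_isUnit_zero this
  haveI : CharP (R ⧸ Ideal.span {(p : R)}) p := CharP.quotient R p hpnonunit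
  have hsub : ∀ g : P, MonoidAlgebra.of 𝒪 P g - 1 ∈ I := by
    intro g
    have hg : g ^ (p ^ n) = 1 := by rw [← hP]; exact pow_card_eq_one'
    have hof : (MonoidAlgebra.of 𝒪 P g) ^ (p ^ n) = 1 := by rw [← map_pow, hg, map_one]
    refine Ideal.mem_radical_iff.mpr ⟨p ^ n, ?_⟩
    rw [← Ideal.Quotient.eq_zero_iff_mem, map_pow, map_sub, map_one, sub_pow_char_pow,
      one_pow, ← map_pow, hof, map_one, sub_self]
  have hkerprime : (RingHom.ker φ).IsPrime := RingHom.ker_isPrime φ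
  have hIker : I ≤ RingHom.ker φ := by
    rw [hI, ← hkerprime.radical]
    refine Ideal.radical_mono ?_
    rw [Ideal.span_le, Set.singleton_subset_iff]
    exact hφp
  have hkey : ∀ x : R, x - algebraMap 𝒪 R (ε x) ∈ I := by
    intro x
    induction x using MonoidAlgebra.induction_on with
    | of g =>
      have : ε (MonoidAlgebra.of 𝒪 P g) = 1 := by
        rw [hε, MonoidAlgebra.lift_of]; rfl
      rw [this, map_one]
      exact hsub g
    | add f g hf hg =>
      have : f + g - algebraMap 𝒪 R (ε (f + g)) =
          (f - algebraMap 𝒪 R (ε f)) + (g - algebraMap 𝒪 R (ε g)) := by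
        rw [map_add, map_add]; ring
      rw [this]; exact Ideal.add_mem _ hf hg
    | smul r f hf =>
      have : r • f - algebraMap 𝒪 R (ε (r • f)) =
          algebraMap 𝒪 R r * (f - algebraMap 𝒪 R (ε f)) := by
        simp only [map_smul, Algebra.smul_def, smul_eq_mul, map_mul, AlgHom.commutes,
          Algebra.algebraMap_self, RingHom.id_apply]
        rw [show ε (algebraMap 𝒪 (MonoidAlgebra 𝒪 P) r) = r from ε.commutes r]
        ring
      rw [this]; exact Ideal.mul_mem_left _ _ hf
  have hkerI : RingHom.ker φ ≤ I := by
    intro x hx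
    have key : x - algebraMap 𝒪 R (ε x) ∈ I := hkey x
    have hεx : ε x ∈ I₀ := by
      rw [RingHom.mem_ker, hφ, RingHom.comp_apply, Ideal.Quotient.eq_zero_iff_mem] at hx
      exact hx
    obtain ⟨c, hc⟩ := Ideal.mem_span_singleton'.mp hεx
    have : algebraMap 𝒪 R (ε x) ∈ I := by
      apply Ideal.le_radical
      rw [← hc, map_mul, map_natCast]
      exact Ideal.mul_mem_left _ _ hpspan
    simpa using Ideal.add_mem _ key this
  have hkereq : RingHom.ker φ = I := le_antisymm hkerI hIker
  have hφsurj : Function.Surjective φ := by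
    intro y
    obtain ⟨a, rfl⟩ := Ideal.Quotient.mk_surjective y
    exact ⟨algebraMap 𝒪 R a, by rw [hφ, RingHom.comp_apply]; simp [AlgHom.commutes]⟩
  have hImax : I.IsMaximal := hkereq ▸ RingHom.ker_isMaximal_of_surjective φ hφsurj
  refine ⟨hImax, fun q hq => ?_⟩
  obtain ⟨M, hM, hqM⟩ := Ideal.exists_le_maximal q hq.ne_top
  haveI : Module.Finite 𝒪 R :=
    inferInstance
  haveI : Algebra.IsIntegral 𝒪 R := Algebra.IsIntegral.of_finite 𝒪 R
  have hcomap : (M.comap (algebraMap 𝒪 R)).IsMaximal :=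
    Ideal.isMaximal_comap_of_isIntegral_of_isMaximal M
  have hcomap' : M.comap (algebraMap 𝒪 R) = I₀ := by
    rw [← h𝒪]
    exact IsLocalRing.eq_maximalIdeal hcomap
  have hpM : (p : R) ∈ M := by
    have : (p : 𝒪) ∈ M.comap (algebraMap 𝒪 R) := hcomap' ▸ Ideal.subset_span rfl
    simpa using this
  have hIM : I ≤ M := by
    rw [hI, ← hM.isPrime.radical]
    exact Ideal.radical_mono (by rwa [Ideal.span_le, Set.singleton_subset_iff])
  exact le_trans hqM (hImax.eq_of_le hM.ne_top hIM).ge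

theorem aux_frac {A : Type*} [CommRing A] (𝔭 : Ideal A) [𝔭.IsPrime]
    (hM : 𝔭.primeCompl ≤ nonZeroDivisors A) :
    ∃ e : FractionRing A ≃+* FractionRing (Localization.AtPrime 𝔭),
      ∀ x : A, e (algebraMap A (FractionRing A) x) =
        algebraMap (Localization.AtPrime 𝔭) (FractionRing (Localization.AtPrime 𝔭))
          (algebraMap A (Localization.AtPrime 𝔭) x) := by
  letI : Algebra (Localization.AtPrime 𝔭) (FractionRing A) :=
    IsLocalization.localizationAlgebraOfSubmonoidLe _ _ 𝔭.primeCompl (nonZeroDivisors A) hM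
  haveI : IsScalarTower A (Localization.AtPrime 𝔭) (FractionRing A) :=
    IsLocalization.localization_isScalarTower_of_submonoid_le _ _ _ _ hM
  haveI : IsFractionRing (Localization.AtPrime 𝔭) (FractionRing A) :=
    IsFractionRing.isFractionRing_of_isLocalization 𝔭.primeCompl _ _ hM
  let e' : FractionRing A ≃ₐ[Localization.AtPrime 𝔭]
      FractionRing (Localization.AtPrime 𝔭) :=
    IsLocalization.algEquiv (nonZeroDivisors (Localization.AtPrime 𝔭)) _ _
  refine ⟨e'.toRingEquiv, fun x => ?_⟩
  rw [IsScalarTower.algebraMap_apply A (Localization.AtPrime 𝔭) (FractionRing A) x]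
  exact e'.commutes _

set_option maxHeartbeats 2000000 in
set_option synthInstance.maxHeartbeats 1000000 in
/-- Let `p` be a prime, `E` a finite unramified extension of `ℚ_p` with ring of integers `𝒪`
(encoded abstractly: a local domain of characteristic zero, finite over `ℤ_p`, whose maximal
ideal is generated by `p`), and `P` a finite abelian group of `p`-power order.  Set
`Λ := 𝒪[P][[T]]` and let `𝔭` be the ideal of `Λ` generated by the radical `√(p𝒪[P])`.
Then `𝔭` is prime, every element of `Λ ∖ 𝔭` is a non-zero-divisor of `Λ`, and the canonical
ring homomorphism `Q(Λ) → Q(Λ_𝔭)` between total quotient rings is an isomorphism (stated as: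
there is a ring isomorphism compatible with the canonical maps from `Λ`). -/
theorem stmt_9 (p : ℕ) [Fact p.Prime]
    (𝒪 : Type*) [CommRing 𝒪] [IsDomain 𝒪] [CharZero 𝒪] [IsLocalRing 𝒪]
    [Algebra ℤ_[p] 𝒪] [Module.Finite ℤ_[p] 𝒪]
    (h𝒪 : IsLocalRing.maximalIdeal 𝒪 = Ideal.span {(p : 𝒪)})
    (P : Type*) [CommGroup P] [Finite P] (n : ℕ) (hP : Nat.card P = p ^ n)
    (𝔭 : Ideal (PowerSeries (MonoidAlgebra 𝒪 P)))
    (h𝔭 : 𝔭 = Ideal.map (PowerSeries.C : MonoidAlgebra 𝒪 P →+* PowerSeries (MonoidAlgebra 𝒪 P))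
        ((Ideal.span {(p : MonoidAlgebra 𝒪 P)}).radical)) :
    ∃ _ : 𝔭.IsPrime,
      (∀ x : PowerSeries (MonoidAlgebra 𝒪 P), x ∉ 𝔭 →
        x ∈ nonZeroDivisors (PowerSeries (MonoidAlgebra 𝒪 P))) ∧
      ∃ e : FractionRing (PowerSeries (MonoidAlgebra 𝒪 P)) ≃+*
          FractionRing (Localization.AtPrime 𝔭),
        ∀ x : PowerSeries (MonoidAlgebra 𝒪 P),
          e (algebraMap (PowerSeries (MonoidAlgebra 𝒪 P))
              (FractionRing (PowerSeries (MonoidAlgebra 𝒪 P))) x) =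
            algebraMap (Localization.AtPrime 𝔭) (FractionRing (Localization.AtPrime 𝔭))
              (algebraMap (PowerSeries (MonoidAlgebra 𝒪 P)) (Localization.AtPrime 𝔭) x) := by
  classical
  set R := MonoidAlgebra 𝒪 P with hRdef
  obtain ⟨hImax, hprimes⟩ := aux_local' p 𝒪 h𝒪 P n hP
  set I : Ideal R := (Ideal.span {(p : R)}).radical with hIdef
  haveI hIprime : I.IsPrime := hImax.isPrime
  haveI : IsReduced R := aux_red' 𝒪 P
  haveI : Module.Finite 𝒪 R :=
    inferInstance
  haveI : Module.Finite ℤ_[p] R := Module.Finite.trans 𝒪 R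
  haveI : IsNoetherianRing R :=
    isNoetherian_of_tower ℤ_[p] (isNoetherian_of_isNoetherianRing_of_finite ℤ_[p] R)
  have hIFG : I.FG := IsNoetherian.noetherian I
  set Φ : PowerSeries R →+* PowerSeries (R ⧸ I) :=
    PowerSeries.map (Ideal.Quotient.mk I) with hΦ
  have hker : ∀ f : PowerSeries R, Φ f = 0 ↔ ∀ k, PowerSeries.coeff k f ∈ I := by
    intro f
    constructor
    · intro h k
      have := congrArg (PowerSeries.coeff k) h
      rw [hΦ, PowerSeries.coeff_map] at this
      simpa [Ideal.Quotient.eq_zero_iff_mem] using this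
    · intro h
      ext k
      rw [hΦ, PowerSeries.coeff_map]
      simpa [Ideal.Quotient.eq_zero_iff_mem] using h k
  have h𝔭ker : 𝔭 = RingHom.ker Φ := by
    rw [h𝔭]
    apply le_antisymm
    · rw [Ideal.map_le_iff_le_comap]
      intro a ha
      rw [Ideal.mem_comap, RingHom.mem_ker, hΦ, PowerSeries.map_C]
      rw [Ideal.Quotient.eq_zero_iff_mem.mpr ha, map_zero]
    · intro f hf
      exact aux_mem_map_C' I hIFG f (fun k => (hker f).mp hf k)
  haveI : IsDomain (R ⧸ I) := Ideal.Quotient.isDomain I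
  have hp1 : 𝔭.IsPrime := h𝔭ker ▸ RingHom.ker_isPrime Φ
  have hb : ∀ x : PowerSeries R, x ∉ 𝔭 → x ∈ nonZeroDivisors (PowerSeries R) := by
    intro x hx
    rw [mem_nonZeroDivisors_iff_right]
    intro y hy
    by_contra hy0
    obtain ⟨k, hk⟩ : ∃ k, PowerSeries.coeff k y ≠ 0 := by
      by_contra h
      push_neg at h
      exact hy0 (PowerSeries.ext h)
    have hnn : ¬ IsNilpotent (PowerSeries.coeff k y) := fun h => hk h.eq_zero
    obtain ⟨J, hJ, hyJ⟩ : ∃ J : Ideal R, J.IsPrime ∧ PowerSeries.coeff k y ∉ J := by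
      by_contra h
      push_neg at h
      exact hnn (nilpotent_iff_mem_prime.mpr (fun J hJ => h J hJ))
    haveI := hJ
    haveI : IsDomain (R ⧸ J) := Ideal.Quotient.isDomain J
    set ΦJ : PowerSeries R →+* PowerSeries (R ⧸ J) :=
      PowerSeries.map (Ideal.Quotient.mk J) with hΦJ
    have hkerJp : (RingHom.ker ΦJ).IsPrime := RingHom.ker_isPrime _
    have hcoeffJ : ∀ f : PowerSeries R, f ∈ RingHom.ker ΦJ →
        ∀ m, PowerSeries.coeff m f ∈ J := by
      intro f hf m
      rw [RingHom.mem_ker] at hf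
      have := congrArg (PowerSeries.coeff m) hf
      rw [hΦJ, PowerSeries.coeff_map] at this
      simpa [Ideal.Quotient.eq_zero_iff_mem] using this
    have hyk : y ∉ RingHom.ker ΦJ := fun h => hyJ (hcoeffJ y h k)
    have hxy : y * x ∈ RingHom.ker ΦJ := by
      rw [RingHom.mem_ker, hy, map_zero]
    have hxJ : x ∈ RingHom.ker ΦJ := (hkerJp.mem_or_mem hxy).resolve_left hyk
    apply hx
    rw [h𝔭ker, RingHom.mem_ker, hker]
    intro m
    exact hprimes J hJ (hcoeffJ x hxJ m)
  haveI := hp1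
  have hM : 𝔭.primeCompl ≤ nonZeroDivisors (PowerSeries R) := fun x hx => hb x hx
  obtain ⟨e, he⟩ := aux_frac 𝔭 hM
  exact ⟨hp1, hb, e, he⟩
end
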